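/- arXiv:math/9805131 — 5 statements merged into one kernel-verified Lean document; each statement's English description precedes it below -/
import Mathlib

section
/- The operator X defined by (Xf)(t) = i t⁻¹ (f(q⁻¹t) − f(qt)) on the domain D(X) = {f ∈ H : t⁻¹ f(t) ∈ H} is a symmetric operator on H (i.e., D(X) is dense and ⟨Xf, g⟩ = ⟨f, Xg⟩ for all f, g ∈ D(X)); moreover U maps D(X) onto D(X) and U* X U = q X on D(X). -/
open MeasureTheory
open scoped ENNReal Topology

private lemma scale_pre {q : ℝ} (hq0 : 0 < q) (hq1 : q < 1)
    {μ₁ : Measure ℝ} {μ : Measure ℝ} (hμ0 : μ (Set.Ioi (0 : ℝ))ᶜ = 0)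
    (hμ : ∀ M : Set ℝ, MeasurableSet M → M ⊆ Set.Ico q 1 → ∀ n : ℤ,
      μ ((fun t => q ^ n * t) '' M) = ENNReal.ofReal (q ^ n) * μ₁ M)
    {A : Set ℝ} (hA : MeasurableSet A) :
    μ ((fun t => q * t) ⁻¹' A) = (ENNReal.ofReal q)⁻¹ * μ A := by
  have hqn : ∀ n : ℤ, (0:ℝ) < q ^ n := fun n => zpow_pos hq0 n
  set I : ℤ → Set ℝ := fun n => Set.Ico (q ^ (n+1)) (q ^ n) with hI
  have hanti : StrictAnti (fun n : ℤ => q ^ n) := zpow_right_strictAnti₀ hq0 hq1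
  have hIdisj : Pairwise (Function.onFun Disjoint I) := by
    intro m n hmn
    rcases hmn.lt_or_gt with h | h
    · refine Set.Ico_disjoint_Ico.2 ?_
      exact le_trans (min_le_right _ _) (le_trans (hanti.antitone (by omega)) (le_max_left _ _))
    · refine Set.Ico_disjoint_Ico.2 ?_
      exact le_trans (min_le_left _ _) (le_trans (hanti.antitone (by omega)) (le_max_right _ _))
  have hIuni : (⋃ n, I n) = Set.Ioi (0:ℝ) := by
    ext t
    simp only [Set.mem_iUnion, Set.mem_Ioi, hI, Set.mem_Ico]
    constructor
    · rintro ⟨n, h1, _⟩; exact lt_of_lt_of_le (hqn (n+1)) h1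
    · intro ht
      obtain ⟨n, hn1, hn2⟩ := exists_mem_Ico_zpow ht ((one_lt_inv₀ hq0).2 hq1)
      · refine ⟨-n - 1, ?_, ?_⟩
        · simpa [inv_zpow, ← zpow_neg] using hn1
        · rw [show -n - 1 = -(n+1) by ring]; simpa [inv_zpow, ← zpow_neg] using hn2
  have hmul : ∀ n : ℤ, Measurable (fun t : ℝ => q ^ n * t) := fun n => measurable_const_mul _
  have key : ∀ B : Set ℝ, MeasurableSet B → ∀ n : ℤ,
      μ (B ∩ I n) = ENNReal.ofReal (q ^ n) * μ₁ ((fun t => q ^ n * t) ⁻¹' B ∩ Set.Ico q 1) := by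
    intro B hB n
    have hM : MeasurableSet ((fun t => q ^ n * t) ⁻¹' B ∩ Set.Ico q 1) :=
      ((hmul n) hB).inter measurableSet_Ico
    have himg : (fun t => q ^ n * t) '' ((fun t => q ^ n * t) ⁻¹' B ∩ Set.Ico q 1) = B ∩ I n := by
      rw [Set.inter_comm, Set.image_inter_preimage, Set.image_mul_left_Ico (hqn n), Set.inter_comm]
      rw [mul_one, ← zpow_add_one₀ hq0.ne']
    rw [← himg, hμ _ hM Set.inter_subset_right n]
  have htotal : ∀ B : Set ℝ, MeasurableSet B → μ B = ∑' n : ℤ, μ (B ∩ I n) := by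
    intro B hB
    conv_lhs => rw [← measure_inter_conull hμ0, ← hIuni]
    rw [Set.inter_iUnion, measure_iUnion]
    · exact fun m n hmn => ((hIdisj hmn).mono Set.inter_subset_right Set.inter_subset_right)
    · exact fun n => hB.inter measurableSet_Ico
  have hApre : MeasurableSet ((fun t : ℝ => q * t) ⁻¹' A) := (measurable_const_mul q) hA
  have hshift : ∀ n : ℤ, μ (((fun t : ℝ => q * t) ⁻¹' A) ∩ I n)
      = (ENNReal.ofReal q)⁻¹ * μ (A ∩ I (n+1)) := by
    intro n
    rw [key _ hApre n, key _ hA (n+1)]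
    have hpre : (fun t : ℝ => q ^ n * t) ⁻¹' ((fun t : ℝ => q * t) ⁻¹' A)
        = (fun t : ℝ => q ^ (n+1) * t) ⁻¹' A := by
      ext t
      simp only [Set.mem_preimage]
      rw [zpow_add_one₀ hq0.ne', mul_comm (q ^ n) q, mul_assoc]
    rw [hpre, ← mul_assoc]
    congr 1
    rw [zpow_add_one₀ hq0.ne', ENNReal.ofReal_mul (le_of_lt (hqn n)), ← mul_assoc,
      mul_comm ((ENNReal.ofReal q)⁻¹), mul_assoc, ENNReal.inv_mul_cancel, mul_one]
    · simpa using hq0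
    · exact ENNReal.ofReal_ne_top
  rw [htotal _ hApre, htotal _ hA]
  calc ∑' n : ℤ, μ (((fun t : ℝ => q * t) ⁻¹' A) ∩ I n)
      = ∑' n : ℤ, (ENNReal.ofReal q)⁻¹ * μ (A ∩ I (n+1)) := by
        exact tsum_congr hshift
    _ = (ENNReal.ofReal q)⁻¹ * ∑' n : ℤ, μ (A ∩ I (n+1)) := ENNReal.tsum_mul_left
    _ = (ENNReal.ofReal q)⁻¹ * ∑' n : ℤ, μ (A ∩ I n) := by
        congr 1
        exact (Equiv.addRight (1:ℤ)).tsum_eq fun n => μ (A ∩ I n)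

private lemma map_eq' {q : ℝ} (hq0 : 0 < q) {μ : Measure ℝ}
    (hscale : ∀ A : Set ℝ, MeasurableSet A →
      μ ((fun t => q * t) ⁻¹' A) = (ENNReal.ofReal q)⁻¹ * μ A) :
    Measure.map (fun t : ℝ => q * t) μ = (ENNReal.ofReal q)⁻¹ • μ := by
  ext A hA
  rw [Measure.map_apply (measurable_const_mul q) hA, hscale A hA, Measure.smul_apply,
    smul_eq_mul]

private lemma ae_scale' {q : ℝ} (hq0 : 0 < q) {μ : Measure ℝ}
    (hscale : ∀ A : Set ℝ, MeasurableSet A →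
      μ ((fun t => q * t) ⁻¹' A) = (ENNReal.ofReal q)⁻¹ * μ A)
    {p : ℝ → Prop} (h : ∀ᵐ t ∂μ, p t) : ∀ᵐ t ∂μ, p (q * t) := by
  rw [ae_iff] at h ⊢
  have hz := hscale (toMeasurable μ {t | ¬ p t}) (measurableSet_toMeasurable μ _)
  rw [measure_toMeasurable, h, mul_zero] at hz
  refine measure_mono_null (fun t (ht : ¬ p (q * t)) => ?_) hz
  exact subset_toMeasurable μ _ ht

private lemma ae_scale_inv' {q : ℝ} (hq0 : 0 < q) {μ : Measure ℝ}
    (hscale : ∀ A : Set ℝ, MeasurableSet A →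
      μ ((fun t => q * t) ⁻¹' A) = (ENNReal.ofReal q)⁻¹ * μ A)
    {p : ℝ → Prop} (h : ∀ᵐ t ∂μ, p t) : ∀ᵐ t ∂μ, p (q⁻¹ * t) := by
  rw [ae_iff] at h ⊢
  set N := toMeasurable μ {t | ¬ p t} with hN
  have hNm : MeasurableSet N := measurableSet_toMeasurable μ _
  have hA'm : MeasurableSet ((fun t : ℝ => q⁻¹ * t) ⁻¹' N) :=
    (measurable_const_mul _) hNm
  have hkey := hscale _ hA'm
  have hpre : (fun t : ℝ => q * t) ⁻¹' ((fun t : ℝ => q⁻¹ * t) ⁻¹' N) = N := by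
    ext t; simp [inv_mul_cancel_left₀ hq0.ne']
  rw [hpre, measure_toMeasurable, h] at hkey
  have hz : μ ((fun t : ℝ => q⁻¹ * t) ⁻¹' N) = 0 := by
    rcases (mul_eq_zero.1 hkey.symm) with h1 | h1
    · exact absurd h1 (by simp [ENNReal.inv_ne_zero, ENNReal.ofReal_ne_top])
    · exact h1
  refine measure_mono_null (fun t (ht : ¬ p (q⁻¹ * t)) => ?_) hz
  exact subset_toMeasurable μ _ ht

private lemma memLp_scale_iff' {q : ℝ} (hq0 : 0 < q) {μ : Measure ℝ}
    (hscale : ∀ A : Set ℝ, MeasurableSet A →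
      μ ((fun t => q * t) ⁻¹' A) = (ENNReal.ofReal q)⁻¹ * μ A)
    (h : ℝ → ℂ) : MemLp (fun t => h (q * t)) 2 μ ↔ MemLp h 2 μ := by
  have e := (Homeomorph.mulLeft₀ q hq0.ne').measurableEmbedding
  have hc0 : ENNReal.ofReal q ≠ 0 := by simp [hq0]
  have hiff := e.memLp_map_measure_iff (g := h) (p := (2:ℝ≥0∞)) (μ := μ)
  rw [Homeomorph.coe_mulLeft₀] at hiff
  rw [show (fun t => h (q * t)) = h ∘ (q * ·) from rfl, ← hiff,
    map_eq' hq0 hscale]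
  constructor
  · intro hh
    have := hh.smul_measure (c := ENNReal.ofReal q) ENNReal.ofReal_ne_top
    rwa [smul_smul, ENNReal.mul_inv_cancel hc0 ENNReal.ofReal_ne_top, one_smul] at this
  · intro hh
    exact hh.smul_measure (by simp [hc0])

private lemma integral_scale' {q : ℝ} (hq0 : 0 < q) {μ : Measure ℝ}
    (hscale : ∀ A : Set ℝ, MeasurableSet A →
      μ ((fun t => q * t) ⁻¹' A) = (ENNReal.ofReal q)⁻¹ * μ A)
    (F : ℝ → ℂ) : ∫ t, F (q * t) ∂μ = q⁻¹ • ∫ t, F t ∂μ := by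
  have e := (Homeomorph.mulLeft₀ q hq0.ne').measurableEmbedding
  have h1 := e.integral_map (μ := μ) (g := F)
  rw [Homeomorph.coe_mulLeft₀] at h1
  rw [show (∫ t, F (q * t) ∂μ) = ∫ t, F ((q * ·) t) ∂μ from rfl, ← h1,
    map_eq' hq0 hscale, integral_smul_measure]
  congr 1
  rw [ENNReal.toReal_inv, ENNReal.toReal_ofReal hq0.le]


set_option maxHeartbeats 1000000 in
/-- The operator `X` defined by `(Xf)(t) = i t⁻¹ (f(q⁻¹t) − f(qt))` on the
domain `D(X) = {f ∈ H : t⁻¹ f(t) ∈ H}` is a symmetric operator on `H = L²(ℝ₊, μ)` (its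
domain is dense and `⟨Xf, g⟩ = ⟨f, Xg⟩` for all `f, g ∈ D(X)`); moreover the unitary `U`
maps `D(X)` onto `D(X)` and `U* X U = q X` on `D(X)`. -/
theorem stmt_3 (q : ℝ) (hq0 : 0 < q) (hq1 : q < 1)
    (μ₁ : Measure ℝ) [IsFiniteMeasure μ₁] (hμ₁ne : μ₁ ≠ 0)
    (hμ₁supp : μ₁ (Set.Ico q 1)ᶜ = 0)
    (μ : Measure ℝ) (hμ0 : μ (Set.Ioi (0 : ℝ))ᶜ = 0)
    (hμ : ∀ M : Set ℝ, MeasurableSet M → M ⊆ Set.Ico q 1 → ∀ n : ℤ,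
      μ ((fun t => q ^ n * t) '' M) = ENNReal.ofReal (q ^ n) * μ₁ M)
    (U : Lp ℂ 2 μ ≃ₗᵢ[ℂ] Lp ℂ 2 μ)
    (hU : ∀ f : Lp ℂ 2 μ, ∀ᵐ t ∂μ, (U f) t = ((q ^ ((1 : ℝ)/2) : ℝ) : ℂ) * f (q * t))
    (X : Lp ℂ 2 μ →ₗ.[ℂ] Lp ℂ 2 μ)
    (hXdom : ∀ f : Lp ℂ 2 μ, f ∈ X.domain ↔ MemLp (fun t : ℝ => (t : ℂ)⁻¹ * f t) 2 μ)
    (hX : ∀ f : X.domain, ∀ᵐ t ∂μ,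
      (X f) t = Complex.I * (t : ℂ)⁻¹ *
        ((f : Lp ℂ 2 μ) (q⁻¹ * t) - (f : Lp ℂ 2 μ) (q * t))) :
    Dense (X.domain : Set (Lp ℂ 2 μ)) ∧
    (∀ f g : X.domain, (inner ℂ (X f) (g : Lp ℂ 2 μ) : ℂ) = inner ℂ ((f : Lp ℂ 2 μ)) (X g)) ∧
    (∀ f : Lp ℂ 2 μ, f ∈ X.domain → U f ∈ X.domain) ∧
    (∀ f : Lp ℂ 2 μ, f ∈ X.domain → U.symm f ∈ X.domain) ∧
    (∀ (f : Lp ℂ 2 μ) (hf : f ∈ X.domain) (hUf : U f ∈ X.domain),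
      U.symm (X ⟨U f, hUf⟩) = (q : ℂ) • (X ⟨f, hf⟩)) := by
  have hqne : q ≠ 0 := hq0.ne'
  have hscale : ∀ A : Set ℝ, MeasurableSet A →
      μ ((fun t => q * t) ⁻¹' A) = (ENNReal.ofReal q)⁻¹ * μ A :=
    fun A hA => scale_pre hq0 hq1 hμ0 hμ hA
  have memq : ∀ h : ℝ → ℂ, MemLp h 2 μ → MemLp (fun t => h (q * t)) 2 μ :=
    fun h hh => (memLp_scale_iff' hq0 hscale h).2 hh
  have memqinv : ∀ h : ℝ → ℂ, MemLp h 2 μ → MemLp (fun t => h (q⁻¹ * t)) 2 μ := by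
    intro h hh
    refine (memLp_scale_iff' hq0 hscale (fun t => h (q⁻¹ * t))).1 ?_
    have he : (fun t => h (q⁻¹ * (q * t))) = h := by
      funext t; rw [inv_mul_cancel_left₀ hqne]
    rwa [he]
  set c : ℂ := ((q ^ ((1 : ℝ)/2) : ℝ) : ℂ) with hcdef
  have hcne : c ≠ 0 := by
    simp only [hcdef, ne_eq, Complex.ofReal_eq_zero]
    exact (Real.rpow_pos_of_pos hq0 _).ne'
  have hqC : (q : ℂ) ≠ 0 := by exact_mod_cast hqne
  -- (3) : U maps domain into domain
  have part3 : ∀ f : Lp ℂ 2 μ, f ∈ X.domain → U f ∈ X.domain := by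
    intro f hf
    have hφ : MemLp (fun t : ℝ => (t : ℂ)⁻¹ * f t) 2 μ := (hXdom f).1 hf
    have h1 : MemLp (fun t : ℝ => ((q * t : ℝ) : ℂ)⁻¹ * f (q * t)) 2 μ :=
      memq _ hφ
    have h2 : MemLp (fun t : ℝ => c * ((q : ℂ) * (((q * t : ℝ) : ℂ)⁻¹ * f (q * t)))) 2 μ :=
      (h1.const_mul _).const_mul _
    refine (hXdom (U f)).2 ((memLp_congr_ae ?_).1 h2)
    filter_upwards [hU f] with t ht
    rw [ht]
    push_cast
    rcases eq_or_ne (t : ℂ) 0 with h0 | h0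
    · simp [h0]
    · field_simp [hqC]
  -- (4) : U.symm maps domain into domain
  have part4 : ∀ f : Lp ℂ 2 μ, f ∈ X.domain → U.symm f ∈ X.domain := by
    intro f hf
    have hφ : MemLp (fun t : ℝ => (t : ℂ)⁻¹ * f t) 2 μ := (hXdom f).1 hf
    set g : Lp ℂ 2 μ := U.symm f with hg
    have hUg : U g = f := U.apply_symm_apply f
    have hae : ∀ᵐ t ∂μ, f t = c * g (q * t) := by
      have h1 := hU g
      rw [hUg] at h1
      exact h1
    -- MemLp (fun t => (q*t)⁻¹ * g (q*t))
    have h1 : MemLp (fun t : ℝ => ((q * t : ℝ) : ℂ)⁻¹ * g (q * t)) 2 μ := by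
      have h2 : MemLp (fun t : ℝ => (c⁻¹ * (q : ℂ)⁻¹) * ((t : ℂ)⁻¹ * f t)) 2 μ :=
        hφ.const_mul _
      refine (memLp_congr_ae ?_).1 h2
      filter_upwards [hae] with t ht
      rw [ht]
      push_cast
      rcases eq_or_ne (t : ℂ) 0 with h0 | h0
      · simp [h0]
      · field_simp [hcne, hqC]
    refine (hXdom g).2 ?_
    have := (memLp_scale_iff' hq0 hscale (fun s : ℝ => (s : ℂ)⁻¹ * g s)).1
    exact this h1
  have part5 : ∀ (f : Lp ℂ 2 μ) (hf : f ∈ X.domain) (hUf : U f ∈ X.domain),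
      U.symm (X ⟨U f, hUf⟩) = (q : ℂ) • (X ⟨f, hf⟩) := by
    intro f hf hUf
    set h' : Lp ℂ 2 μ := X ⟨U f, hUf⟩ with hh'
    set w : Lp ℂ 2 μ := U.symm h' with hw
    have hU1 : ∀ᵐ t ∂μ, (U f) (q⁻¹ * t) = c * f (q * (q⁻¹ * t)) :=
      ae_scale_inv' hq0 hscale (p := fun s => (U f) s = c * f (q * s)) (hU f)
    have hU2 : ∀ᵐ t ∂μ, (U f) (q * t) = c * f (q * (q * t)) :=
      ae_scale' hq0 hscale (p := fun s => (U f) s = c * f (q * s)) (hU f)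
    have hh'ae : ∀ᵐ t ∂μ, h' t = Complex.I * (t : ℂ)⁻¹ * c * (f t - f (q * (q * t))) := by
      filter_upwards [hX ⟨U f, hUf⟩, hU1, hU2] with t h1 h2 h3
      rw [mul_inv_cancel_left₀ hqne] at h2
      rw [h1, h2, h3]
      ring
    have hUw : ∀ᵐ t ∂μ, h' t = c * w (q * t) := by
      have h1 := hU w
      rw [hw, U.apply_symm_apply] at h1
      exact h1
    have key : ∀ᵐ t ∂μ, c * w (q * (q⁻¹ * t)) =
        Complex.I * ((q⁻¹ * t : ℝ) : ℂ)⁻¹ * c * (f (q⁻¹ * t) - f (q * (q * (q⁻¹ * t)))) := by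
      refine ae_scale_inv' hq0 hscale
        (p := fun s => c * w (q * s)
          = Complex.I * ((s : ℝ) : ℂ)⁻¹ * c * (f s - f (q * (q * s)))) ?_
      filter_upwards [hUw, hh'ae] with t h1 h2
      rw [← h1, h2]
    refine Lp.ext ?_
    filter_upwards [key, hX ⟨f, hf⟩, Lp.coeFn_smul (q : ℂ) (X ⟨f, hf⟩)] with t h1 h2 h3
    rw [mul_inv_cancel_left₀ hqne] at h1
    have hcast : ((q⁻¹ * t : ℝ) : ℂ)⁻¹ = (q : ℂ) * (t : ℂ)⁻¹ := by
      push_cast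
      rw [mul_inv, inv_inv]
    rw [hcast] at h1
    have h4 : w t = (q : ℂ) * (Complex.I * (t : ℂ)⁻¹ * (f (q⁻¹ * t) - f (q * t))) :=
      mul_left_cancel₀ hcne (h1.trans (by ring))
    rw [h3]
    simp only [Pi.smul_apply, smul_eq_mul]
    rw [h2]
    exact h4
  -- product of two L² functions is integrable
  have hprod : ∀ a b : ℝ → ℂ, MemLp a 2 μ → MemLp b 2 μ →
      Integrable (fun t => (starRingEnd ℂ) (a t) * b t) μ := by
    intro a b ha hb
    have hca : MemLp (fun t => (starRingEnd ℂ) (a t)) 2 μ := by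
      refine MemLp.of_le ha ?_ (Filter.Eventually.of_forall fun t => ?_)
      · exact continuous_star.comp_aestronglyMeasurable ha.1
      · simp
    have h12 : (1 : ℝ≥0∞) / 1 = 1 / 2 + 1 / 2 := by
      rw [ENNReal.add_halves, one_div_one]
    have hm := hca.smul hb (r := 1)
    rw [memLp_one_iff_integrable] at hm
    refine hm.congr ?_
    filter_upwards with t
    simp [Pi.smul_apply', smul_eq_mul, mul_comm]
  have part2 : ∀ f g : X.domain,
      (inner ℂ (X f) (g : Lp ℂ 2 μ) : ℂ) = inner ℂ ((f : Lp ℂ 2 μ)) (X g) := by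
    intro f g
    set F : ℝ → ℂ := ⇑(f : Lp ℂ 2 μ) with hFd
    set G : ℝ → ℂ := ⇑(g : Lp ℂ 2 μ) with hGd
    set φ : ℝ → ℂ := fun t => (t : ℂ)⁻¹ * F t with hφd
    set ψ : ℝ → ℂ := fun t => (t : ℂ)⁻¹ * G t with hψd
    have hφ : MemLp φ 2 μ := (hXdom _).1 f.2
    have hψ : MemLp ψ 2 μ := (hXdom _).1 g.2
    have hFm : MemLp F 2 μ := Lp.memLp _
    have hGm : MemLp G 2 μ := Lp.memLp _
    have ha1 : MemLp (fun t => φ (q⁻¹ * t)) 2 μ := memqinv _ hφ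
    have ha2 : MemLp (fun t => φ (q * t)) 2 μ := memq _ hφ
    have hb1 : MemLp (fun t => ψ (q⁻¹ * t)) 2 μ := memqinv _ hψ
    have hb2 : MemLp (fun t => ψ (q * t)) 2 μ := memq _ hψ
    have int1 : Integrable (fun t => (starRingEnd ℂ) (φ (q⁻¹ * t)) * G t) μ :=
      hprod _ _ ha1 hGm
    have int2 : Integrable (fun t => (starRingEnd ℂ) (φ (q * t)) * G t) μ :=
      hprod _ _ ha2 hGm
    have int3 : Integrable (fun t => (starRingEnd ℂ) (F t) * ψ (q⁻¹ * t)) μ :=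
      hprod _ _ hFm hb1
    have int4 : Integrable (fun t => (starRingEnd ℂ) (F t) * ψ (q * t)) μ :=
      hprod _ _ hFm hb2
    -- pointwise coercion facts
    have hφinv : ∀ t : ℝ, φ (q⁻¹ * t) = (q : ℂ) * (t : ℂ)⁻¹ * F (q⁻¹ * t) := by
      intro t
      simp only [hφd]
      push_cast
      rw [mul_inv, inv_inv]
    have hφq : ∀ t : ℝ, φ (q * t) = (q : ℂ)⁻¹ * (t : ℂ)⁻¹ * F (q * t) := by
      intro t
      simp only [hφd]
      push_cast
      rw [mul_inv]
    have hψinv : ∀ t : ℝ, ψ (q⁻¹ * t) = (q : ℂ) * (t : ℂ)⁻¹ * G (q⁻¹ * t) := by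
      intro t
      simp only [hψd]
      push_cast
      rw [mul_inv, inv_inv]
    have hψq : ∀ t : ℝ, ψ (q * t) = (q : ℂ)⁻¹ * (t : ℂ)⁻¹ * G (q * t) := by
      intro t
      simp only [hψd]
      push_cast
      rw [mul_inv]
    -- LHS splitting
    have hL : (inner ℂ (X f) (g : Lp ℂ 2 μ) : ℂ)
        = (-Complex.I * (q : ℂ)⁻¹) * (∫ t, (starRingEnd ℂ) (φ (q⁻¹ * t)) * G t ∂μ)
          + (Complex.I * (q : ℂ)) * (∫ t, (starRingEnd ℂ) (φ (q * t)) * G t ∂μ) := by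
      rw [L2.inner_def]
      rw [← integral_const_mul, ← integral_const_mul,
        ← integral_add (int1.const_mul _) (int2.const_mul _)]
      refine integral_congr_ae ?_
      filter_upwards [hX f] with t ht
      simp only [RCLike.inner_apply]
      rw [ht, hφinv t, hφq t]
      simp only [map_mul, map_sub, map_inv₀, Complex.conj_I, Complex.conj_ofReal]
      rcases eq_or_ne (t : ℂ) 0 with h0 | h0
      · simp [h0]
      · field_simp [hqC]
        ring
    -- RHS splitting
    have hR : (inner ℂ ((f : Lp ℂ 2 μ)) (X g) : ℂ)
        = (Complex.I * (q : ℂ)⁻¹) * (∫ t, (starRingEnd ℂ) (F t) * ψ (q⁻¹ * t) ∂μ)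
          + (-Complex.I * (q : ℂ)) * (∫ t, (starRingEnd ℂ) (F t) * ψ (q * t) ∂μ) := by
      rw [L2.inner_def]
      rw [← integral_const_mul, ← integral_const_mul,
        ← integral_add (int3.const_mul _) (int4.const_mul _)]
      refine integral_congr_ae ?_
      filter_upwards [hX g] with t ht
      simp only [RCLike.inner_apply]
      rw [ht, hψinv t, hψq t]
      rcases eq_or_ne (t : ℂ) 0 with h0 | h0
      · simp [h0]
      · field_simp [hqC]
        ring
    -- substitution identity 1 :
    have sub1 : (∫ t, (starRingEnd ℂ) (φ (q⁻¹ * t)) * G t ∂μ)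
        = (q : ℂ) * ((q : ℂ) * ∫ t, (starRingEnd ℂ) (F t) * ψ (q * t) ∂μ) := by
      have h1 := integral_scale' hq0 hscale (fun t => (starRingEnd ℂ) (φ (q⁻¹ * t)) * G t)
      have h2 : ∀ t : ℝ, (starRingEnd ℂ) (φ (q⁻¹ * (q * t))) * G (q * t)
          = (q : ℂ) * ((starRingEnd ℂ) (F t) * ψ (q * t)) := by
        intro t
        rw [inv_mul_cancel_left₀ hqne, hψq t, hφd]
        simp only [map_mul, map_inv₀, Complex.conj_ofReal]
        rcases eq_or_ne (t : ℂ) 0 with h0 | h0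
        · simp [h0]
        · field_simp [hqC]
      rw [integral_congr_ae (Filter.Eventually.of_forall h2), integral_const_mul _ _] at h1
      have h3 := congrArg (fun z => (q : ℝ) • z) h1
      simp only [smul_smul, mul_inv_cancel₀ hqne, one_smul] at h3
      rw [← h3, Complex.real_smul]
    -- substitution identity 2 :
    have sub2 : (∫ t, (starRingEnd ℂ) (F t) * ψ (q⁻¹ * t) ∂μ)
        = (q : ℂ) * ((q : ℂ) * ∫ t, (starRingEnd ℂ) (φ (q * t)) * G t ∂μ) := by
      have h1 := integral_scale' hq0 hscale (fun t => (starRingEnd ℂ) (F t) * ψ (q⁻¹ * t))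
      have h2 : ∀ t : ℝ, (starRingEnd ℂ) (F (q * t)) * ψ (q⁻¹ * (q * t))
          = (q : ℂ) * ((starRingEnd ℂ) (φ (q * t)) * G t) := by
        intro t
        rw [inv_mul_cancel_left₀ hqne, hφq t, hψd]
        simp only [map_mul, map_inv₀, Complex.conj_ofReal]
        rcases eq_or_ne (t : ℂ) 0 with h0 | h0
        · simp [h0]
        · field_simp [hqC]
      rw [integral_congr_ae (Filter.Eventually.of_forall h2), integral_const_mul _ _] at h1
      have h3 := congrArg (fun z => (q : ℝ) • z) h1
      simp only [smul_smul, mul_inv_cancel₀ hqne, one_smul] at h3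
      rw [← h3, Complex.real_smul]
    rw [hL, hR, sub1, sub2]
    field_simp
    ring
  -- (1) density of the domain
  have part1 : Dense (X.domain : Set (Lp ℂ 2 μ)) := by
    intro f
    set S : ℕ → Set ℝ := fun n => Set.Icc ((q : ℝ) ^ n) (((q : ℝ) ^ n)⁻¹) with hSd
    have hqnpos : ∀ n : ℕ, (0:ℝ) < q ^ n := fun n => pow_pos hq0 n
    have hSm : ∀ n, MeasurableSet (S n) := fun _ => measurableSet_Icc
    have hmem : ∀ n, MemLp ((S n).indicator ⇑f) 2 μ := fun n => (Lp.memLp f).indicator (hSm n)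
    set g : ℕ → Lp ℂ 2 μ := fun n => (hmem n).toLp _ with hgd
    have hgc : ∀ n, ⇑(g n) =ᵐ[μ] (S n).indicator ⇑f := fun n => (hmem n).coeFn_toLp
    have hdom : ∀ n, g n ∈ X.domain := by
      intro n
      refine (hXdom _).2 ?_
      have hb : MemLp (fun t : ℝ => (((q ^ n : ℝ)⁻¹ : ℝ) : ℂ) * f t) 2 μ :=
        (Lp.memLp f).const_mul _
      have hmeas : AEStronglyMeasurable (fun t : ℝ => (t : ℂ)⁻¹ * ((S n).indicator ⇑f) t) μ :=
        (Complex.measurable_ofReal.inv.aestronglyMeasurable).mul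
          ((Lp.aestronglyMeasurable f).indicator (hSm n))
      have hle : ∀ t : ℝ, ‖(t : ℂ)⁻¹ * ((S n).indicator ⇑f) t‖
          ≤ ‖(((q ^ n : ℝ)⁻¹ : ℝ) : ℂ) * f t‖ := by
        intro t
        by_cases ht : t ∈ S n
        · rw [Set.indicator_of_mem ht]
          rw [norm_mul, norm_mul]
          refine mul_le_mul_of_nonneg_right ?_ (norm_nonneg _)
          rw [norm_inv, Complex.norm_real, Real.norm_eq_abs, Complex.norm_real,
            Real.norm_eq_abs, abs_of_pos (lt_of_lt_of_le (hqnpos n) ht.1),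
            abs_of_pos (inv_pos.2 (hqnpos n))]
          exact inv_anti₀ (hqnpos n) ht.1
        · rw [Set.indicator_of_notMem ht]
          simp only [mul_zero, norm_zero]
          positivity
      have h1 : MemLp (fun t : ℝ => (t : ℂ)⁻¹ * ((S n).indicator ⇑f) t) 2 μ :=
        MemLp.of_le hb hmeas (Filter.Eventually.of_forall hle)
      refine (memLp_congr_ae ?_).2 h1
      filter_upwards [hgc n] with t ht
      rw [ht]
    -- convergence g n → f in Lp
    have hae0 : ∀ᵐ t ∂μ, t ∈ Set.Ioi (0:ℝ) := by
      rw [ae_iff]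
      exact hμ0
    have hIn : Filter.Tendsto
        (fun n => ∫⁻ t, (‖(S n)ᶜ.indicator ⇑f t‖₊ : ℝ≥0∞) ^ (2:ℝ) ∂μ)
        Filter.atTop (𝓝 0) := by
      have h0 : (0 : ℝ≥0∞) = ∫⁻ _, 0 ∂μ := by rw [lintegral_zero]
      rw [h0]
      refine tendsto_lintegral_of_dominated_convergence'
        (bound := fun t => (‖f t‖₊ : ℝ≥0∞) ^ (2:ℝ)) ?_ ?_ ?_ ?_
      · intro n
        exact (ENNReal.continuous_rpow_const.measurable.comp_aemeasurable
          ((Lp.aestronglyMeasurable f).indicator (hSm n).compl).enorm)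
      · intro n
        refine Filter.Eventually.of_forall fun t => ?_
        refine ENNReal.rpow_le_rpow ?_ (by norm_num)
        simp only [ENNReal.coe_le_coe]
        by_cases ht : t ∈ (S n)ᶜ
        · rw [Set.indicator_of_mem ht]
        · rw [Set.indicator_of_notMem ht]; simp
      · -- finite bound
        have h2 : eLpNorm (⇑f) 2 μ
            = (∫⁻ t, (‖f t‖₊ : ℝ≥0∞) ^ (2:ℝ) ∂μ) ^ (1/(2:ℝ)) := by
          rw [eLpNorm_eq_lintegral_rpow_enorm_toReal two_ne_zero ENNReal.ofNat_ne_top]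
          simp only [ENNReal.toReal_ofNat]
          simp only [enorm_eq_nnnorm]
        intro hcontra
        apply Lp.eLpNorm_ne_top f
        rw [h2, hcontra, ENNReal.top_rpow_of_pos (by norm_num)]
      · filter_upwards [hae0] with t ht
        have h1 : ∀ᶠ n in Filter.atTop, (q:ℝ) ^ n < t :=
          (tendsto_pow_atTop_nhds_zero_of_lt_one hq0.le hq1).eventually_lt_const ht
        have h2 : ∀ᶠ n in Filter.atTop, (q:ℝ) ^ n < t⁻¹ :=
          (tendsto_pow_atTop_nhds_zero_of_lt_one hq0.le hq1).eventually_lt_const (inv_pos.2 ht)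
        refine Filter.Tendsto.congr' ?_ tendsto_const_nhds
        filter_upwards [h1, h2] with n hn1 hn2
        have htS : t ∈ S n := by
          constructor
          · exact hn1.le
          · have := inv_strictAnti₀ (hqnpos n) hn2
            rw [inv_inv] at this
            exact this.le
        rw [Set.indicator_of_notMem (by simpa using htS)]
        simp
    have help : Filter.Tendsto (fun n => eLpNorm ((S n)ᶜ.indicator ⇑f) 2 μ)
        Filter.atTop (𝓝 0) := by
      have hform : ∀ n, eLpNorm ((S n)ᶜ.indicator ⇑f) 2 μ
          = (∫⁻ t, (‖(S n)ᶜ.indicator ⇑f t‖₊ : ℝ≥0∞) ^ (2:ℝ) ∂μ) ^ (1/(2:ℝ)) := by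
        intro n
        rw [eLpNorm_eq_lintegral_rpow_enorm_toReal two_ne_zero ENNReal.ofNat_ne_top]
        simp only [ENNReal.toReal_ofNat]
        simp only [enorm_eq_nnnorm]
      simp only [hform]
      have hcont := (ENNReal.continuous_rpow_const (y := 1/(2:ℝ))).tendsto 0
      have := hcont.comp hIn
      rwa [ENNReal.zero_rpow_of_pos (by norm_num)] at this
    have hdist : ∀ n, dist (g n) f = (eLpNorm ((S n)ᶜ.indicator ⇑f) 2 μ).toReal := by
      intro n
      rw [Lp.dist_def]
      congr 1
      refine eLpNorm_congr_ae ?_ |>.trans (eLpNorm_neg _ _ _)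
      filter_upwards [hgc n] with t ht
      simp only [Pi.sub_apply, Pi.neg_apply]
      rw [ht]
      by_cases h : t ∈ S n
      · rw [Set.indicator_of_mem h, Set.indicator_of_notMem (by simpa using h)]
        ring
      · rw [Set.indicator_of_notMem h, Set.indicator_of_mem (by simpa using h)]
        ring
    have hconv : Filter.Tendsto g Filter.atTop (𝓝 f) := by
      rw [tendsto_iff_dist_tendsto_zero]
      simp only [hdist]
      have := (ENNReal.tendsto_toReal (a := 0) (by simp)).comp help
      simpa [Function.comp_def] using this
    exact mem_closure_of_tendsto hconv (Filter.Eventually.of_forall hdom)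
  exact ⟨part1, part2, part3, part4, part5⟩
end

section
/- For every f ∈ D₀ one has (P X f)(t) = i q^{1/2}(U*f)(t) − i q^{-1/2}(Uf)(t) and (X P f)(t) = i q^{-1/2}(U*f)(t) − i q^{1/2}(Uf)(t) μ-almost everywhere; consequently (PX − qXP)f = i(q^{3/2} − q^{-1/2}) Uf and (XP − qPX)f = −i(q^{3/2} − q^{-1/2}) U*f, so the operators P, X, U satisfy the defining relations of the q-deformed Heisenberg algebra on D₀. -/
open MeasureTheory

/-- The operator `U`: `(Uf)(t) = q^{1/2} f(qt)`, acting on functions. -/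
noncomputable def Uop (q : ℝ) (f : ℝ → ℂ) : ℝ → ℂ :=
  fun t => ((q ^ ((1 : ℝ)/2) : ℝ) : ℂ) * f (q * t)

/-- The adjoint operator `U*`: `(U*f)(t) = q^{-1/2} f(q⁻¹t)`, acting on functions. -/
noncomputable def UstarOp (q : ℝ) (f : ℝ → ℂ) : ℝ → ℂ :=
  fun t => ((q ^ (-(1 : ℝ)/2) : ℝ) : ℂ) * f (q⁻¹ * t)

/-- The operator `P`: `(Pf)(t) = t f(t)`, acting on functions. -/
noncomputable def Pop (f : ℝ → ℂ) : ℝ → ℂ := fun t => (t : ℂ) * f t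

/-- The operator `X`: `(Xf)(t) = i t⁻¹ (f(q⁻¹t) − f(qt))`, acting on functions. -/
noncomputable def Xop (q : ℝ) (f : ℝ → ℂ) : ℝ → ℂ :=
  fun t => Complex.I * (t : ℂ)⁻¹ * (f (q⁻¹ * t) - f (q * t))

/-- For every `f` in `D₀` (the square-integrable functions supported in a
compact interval `[a,b] ⊆ (0,∞)`) one has, `μ`-almost everywhere,
`(PXf)(t) = i q^{1/2}(U*f)(t) − i q^{-1/2}(Uf)(t)` and
`(XPf)(t) = i q^{-1/2}(U*f)(t) − i q^{1/2}(Uf)(t)`; consequently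
`(PX − qXP)f = i(q^{3/2} − q^{-1/2}) Uf` and `(XP − qPX)f = −i(q^{3/2} − q^{-1/2}) U*f`,
so `P, X, U` satisfy the defining relations of the `q`-deformed Heisenberg algebra on `D₀`. -/
theorem stmt_4 (q : ℝ) (hq0 : 0 < q) (hq1 : q < 1)
    (μ₁ : Measure ℝ) [IsFiniteMeasure μ₁] (hμ₁supp : μ₁ (Set.Ico q 1)ᶜ = 0)
    (μ : Measure ℝ) (hμ0 : μ (Set.Ioi (0 : ℝ))ᶜ = 0)
    (hμ : ∀ M : Set ℝ, MeasurableSet M → M ⊆ Set.Ico q 1 → ∀ n : ℤ,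
      μ ((fun t => q ^ n * t) '' M) = ENNReal.ofReal (q ^ n) * μ₁ M)
    (f : ℝ → ℂ) (hf : MemLp f 2 μ)
    (a b : ℝ) (ha : 0 < a) (hab : a ≤ b)
    (hsupp : ∀ t : ℝ, t ∉ Set.Icc a b → f t = 0) :
    (∀ᵐ t ∂μ, Pop (Xop q f) t =
      Complex.I * ((q ^ ((1 : ℝ)/2) : ℝ) : ℂ) * UstarOp q f t
        - Complex.I * ((q ^ (-(1 : ℝ)/2) : ℝ) : ℂ) * Uop q f t) ∧
    (∀ᵐ t ∂μ, Xop q (Pop f) t =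
      Complex.I * ((q ^ (-(1 : ℝ)/2) : ℝ) : ℂ) * UstarOp q f t
        - Complex.I * ((q ^ ((1 : ℝ)/2) : ℝ) : ℂ) * Uop q f t) ∧
    (∀ᵐ t ∂μ, Pop (Xop q f) t - (q : ℂ) * Xop q (Pop f) t =
      Complex.I * ((q ^ ((3 : ℝ)/2) - q ^ (-(1 : ℝ)/2) : ℝ) : ℂ) * Uop q f t) ∧
    (∀ᵐ t ∂μ, Xop q (Pop f) t - (q : ℂ) * Pop (Xop q f) t =
      -(Complex.I * ((q ^ ((3 : ℝ)/2) - q ^ (-(1 : ℝ)/2) : ℝ) : ℂ)) * UstarOp q f t) := by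
  have hpos : ∀ᵐ t ∂μ, t ∈ Set.Ioi (0 : ℝ) := by
    rw [ae_iff]; exact hμ0
  have he : (q ^ ((1 : ℝ)/2)) * (q ^ (-(1 : ℝ)/2)) = 1 := by
    rw [← Real.rpow_add hq0]; norm_num
  have hee : (q ^ ((1 : ℝ)/2)) * (q ^ ((1 : ℝ)/2)) = q := by
    rw [← Real.rpow_add hq0]; norm_num
  have he'e' : (q ^ (-(1 : ℝ)/2)) * (q ^ (-(1 : ℝ)/2)) = q⁻¹ := by
    rw [← Real.rpow_add hq0]; norm_num [Real.rpow_neg_one]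
  have h32 : q ^ ((3 : ℝ)/2) = q * q ^ ((1 : ℝ)/2) := by
    rw [show (3 : ℝ)/2 = 1 + 1/2 by norm_num, Real.rpow_add hq0, Real.rpow_one]
  have hqC : (q : ℂ) ≠ 0 := by exact_mod_cast hq0.ne'
  have heC : ((q ^ ((1 : ℝ)/2) : ℝ) : ℂ) * ((q ^ (-(1 : ℝ)/2) : ℝ) : ℂ) = 1 := by
    rw [← Complex.ofReal_mul, he, Complex.ofReal_one]
  have heeC : ((q ^ ((1 : ℝ)/2) : ℝ) : ℂ) * ((q ^ ((1 : ℝ)/2) : ℝ) : ℂ) = (q : ℂ) := by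
    rw [← Complex.ofReal_mul, hee]
  have he'e'C : ((q ^ (-(1 : ℝ)/2) : ℝ) : ℂ) * ((q ^ (-(1 : ℝ)/2) : ℝ) : ℂ) = (q : ℂ)⁻¹ := by
    rw [← Complex.ofReal_mul, he'e']; push_cast; ring
  have h32C : ((q ^ ((3 : ℝ)/2) : ℝ) : ℂ) = (q : ℂ) * ((q ^ ((1 : ℝ)/2) : ℝ) : ℂ) := by
    rw [← Complex.ofReal_mul, h32]
  set e : ℂ := ((q ^ ((1 : ℝ)/2) : ℝ) : ℂ) with he_def
  set e' : ℂ := ((q ^ (-(1 : ℝ)/2) : ℝ) : ℂ) with he'_def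
  have key1 : ∀ᵐ t ∂μ, Pop (Xop q f) t =
      Complex.I * e * UstarOp q f t - Complex.I * e' * Uop q f t := by
    filter_upwards [hpos] with t ht
    have htC : (t : ℂ) ≠ 0 := by exact_mod_cast (ne_of_gt ht)
    have hti : (t : ℂ) * (t : ℂ)⁻¹ = 1 := mul_inv_cancel₀ htC
    simp only [Pop, Xop, UstarOp, Uop, ← he'_def, ← he_def]
    linear_combination (Complex.I * (f (q⁻¹ * t) - f (q * t))) * hti
      + (Complex.I * (f (q * t) - f (q⁻¹ * t))) * heC
  have key2 : ∀ᵐ t ∂μ, Xop q (Pop f) t =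
      Complex.I * e' * UstarOp q f t - Complex.I * e * Uop q f t := by
    filter_upwards [hpos] with t ht
    have htC : (t : ℂ) ≠ 0 := by exact_mod_cast (ne_of_gt ht)
    have hti : (t : ℂ) * (t : ℂ)⁻¹ = 1 := mul_inv_cancel₀ htC
    simp only [Pop, Xop, UstarOp, Uop, ← he'_def, ← he_def]
    push_cast
    linear_combination (Complex.I * (q : ℂ)⁻¹ * f (q⁻¹ * t) - Complex.I * (q : ℂ) * f (q * t)) * hti
      + (-(Complex.I * f (q⁻¹ * t))) * he'e'C + (Complex.I * f (q * t)) * heeC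
  refine ⟨key1, key2, ?_, ?_⟩
  · filter_upwards [key1, key2] with t h1 h2
    rw [h1, h2]
    simp only [Uop, UstarOp, ← he'_def, ← he_def, Complex.ofReal_sub, h32C]
    have hqq : (q : ℂ) * (q : ℂ)⁻¹ = 1 := mul_inv_cancel₀ hqC
    linear_combination (Complex.I * f (q⁻¹ * t)) * heC
      + (-(q : ℂ) * Complex.I * f (q⁻¹ * t)) * he'e'C
      - (Complex.I * f (q⁻¹ * t)) * hqq
  · filter_upwards [key1, key2] with t h1 h2
    rw [h1, h2]
    simp only [Uop, UstarOp, ← he'_def, ← he_def, Complex.ofReal_sub, h32C]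
    linear_combination ((q : ℂ) * Complex.I * f (q * t)) * heC
      + (-(Complex.I * f (q * t))) * heeC
end

section
/- For every h ∈ 𝕳 = L²([q,1), μ₁), the functions h^e and h^o belong to D(X*), and the adjoint acts on them by: (X* h^e)(t) = −i t⁻¹ h(qt) for t ∈ [1, q⁻¹) and (X* h^e)(t) = 0 for t ∈ ℝ₊ \ [1, q⁻¹); (X* h^o)(t) = −i t⁻¹ h(t) for t ∈ [q, 1) and (X* h^o)(t) = 0 for t ∈ ℝ₊ \ [q, 1). -/
open MeasureTheory

open MeasureTheory Set Filter
open scoped ENNReal NNReal Topology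

noncomputable section
namespace S5

variable {q : ℝ} {μ₁ μ : Measure ℝ}

def piece (q : ℝ) (n : ℤ) : Set ℝ := Set.Ico (q ^ (n+1)) (q ^ n)

lemma measurableSet_piece (q : ℝ) (n : ℤ) : MeasurableSet (piece q n) := measurableSet_Ico

lemma image_Ico_eq_piece (hq0 : 0 < q) (n : ℤ) :
    (fun t => q ^ n * t) '' Set.Ico q 1 = piece q n := by
  have hp : (0:ℝ) < q ^ n := zpow_pos hq0 n
  ext t
  simp only [Set.mem_image, Set.mem_Ico, piece]
  constructor
  · rintro ⟨s, ⟨h1, h2⟩, rfl⟩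
    refine ⟨?_, ?_⟩
    · rw [zpow_add_one₀ hq0.ne']
      exact mul_le_mul_of_nonneg_left h1 hp.le
    · calc q^n * s < q^n * 1 := mul_lt_mul_of_pos_left h2 hp
        _ = q^n := mul_one _
  · rintro ⟨h1, h2⟩
    refine ⟨q ^ (-n) * t, ⟨?_, ?_⟩, ?_⟩
    · rw [zpow_add_one₀ hq0.ne'] at h1
      calc q = q^(-n) * (q^n * q) := by
              rw [← mul_assoc, zpow_neg, inv_mul_cancel₀ hp.ne', one_mul]
        _ ≤ q^(-n) * t := mul_le_mul_of_nonneg_left h1 (zpow_pos hq0 _).le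
    · have h3 := mul_lt_mul_of_pos_left h2 (zpow_pos hq0 (-n))
      rw [zpow_neg] at h3 ⊢
      rwa [inv_mul_cancel₀ hp.ne'] at h3
    · rw [← mul_assoc, zpow_neg, mul_inv_cancel₀ hp.ne', one_mul]

lemma mem_piece_iff (hq0 : 0 < q) {n : ℤ} {t : ℝ} :
    t ∈ piece q n ↔ ∃ s ∈ Set.Ico q 1, q ^ n * s = t := by
  rw [← image_Ico_eq_piece hq0 n]; simp [Set.mem_image]

lemma piece_subset_Ioi (hq0 : 0 < q) (n : ℤ) : piece q n ⊆ Set.Ioi 0 :=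
  fun t ht => lt_of_lt_of_le (zpow_pos hq0 _) ht.1

lemma exists_mem_piece (hq0 : 0 < q) (hq1 : q < 1) {t : ℝ} (ht : 0 < t) :
    ∃ n : ℤ, t ∈ piece q n := by
  have hqi : 1 < q⁻¹ := one_lt_inv₀ hq0 |>.mpr hq1
  obtain ⟨n, h1, h2⟩ := exists_mem_Ico_zpow ht hqi
  refine ⟨-n-1, ?_, ?_⟩
  · have : (-n-1+1 : ℤ) = -n := by ring
    rw [this, zpow_neg]
    rwa [inv_zpow] at h1
  · have : q ^ (-n-1 : ℤ) = q⁻¹ ^ (n+1) := by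
      rw [inv_zpow, ← zpow_neg]; ring_nf
    rwa [this]

lemma piece_pairwise_disjoint (hq0 : 0 < q) (hq1 : q < 1) :
    Pairwise (Function.onFun Disjoint (piece q)) := by
  have anti := zpow_right_anti₀ hq0 hq1.le
  intro m n hmn
  have key : ∀ m n : ℤ, m < n → Disjoint (piece q m) (piece q n) := by
    intro m n h
    apply Set.Ico_disjoint_Ico.mpr
    have : q ^ n ≤ q ^ (m+1) := anti (by omega)
    calc min (q ^ m) (q ^ n) ≤ q ^ n := min_le_right _ _
      _ ≤ q ^ (m+1) := this
      _ ≤ max (q ^ (m+1)) (q ^ (n+1)) := le_max_left _ _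
  rcases lt_or_gt_of_ne hmn with h | h
  · exact key _ _ h
  · exact (key _ _ h).symm

lemma measure_inter_of_compl_null {ν : Measure ℝ} {K : Set ℝ} (hK : ν Kᶜ = 0) (A : Set ℝ) :
    ν (A ∩ K) = ν A := by
  refine le_antisymm (measure_mono Set.inter_subset_left) ?_
  calc ν A ≤ ν (A ∩ K) + ν (A \ K) := measure_le_inter_add_diff ν A K
    _ ≤ ν (A ∩ K) + ν Kᶜ := by
        gcongr; exact Set.diff_subset_compl A K
    _ = ν (A ∩ K) := by rw [hK, add_zero]

lemma restrict_piece (hq0 : 0 < q)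
    (hμ₁supp : μ₁ (Set.Ico q 1)ᶜ = 0)
    (hμ : ∀ M : Set ℝ, MeasurableSet M → M ⊆ Set.Ico q 1 → ∀ n : ℤ,
      μ ((fun t => q ^ n * t) '' M) = ENNReal.ofReal (q ^ n) * μ₁ M)
    (n : ℤ) :
    μ.restrict (piece q n) = ENNReal.ofReal (q ^ n) • Measure.map (fun t => q ^ n * t) μ₁ := by
  have hp : (0:ℝ) < q ^ n := zpow_pos hq0 n
  have hinj : Function.Injective (fun t : ℝ => q ^ n * t) := mul_right_injective₀ hp.ne'
  have hsurj : Function.Surjective (fun t : ℝ => q ^ n * t) := fun x =>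
    ⟨(q ^ n)⁻¹ * x, by field_simp⟩
  refine Measure.ext fun s hs => ?_
  rw [Measure.restrict_apply hs, Measure.smul_apply,
    Measure.map_apply (measurable_const_mul _) hs]
  set M : Set ℝ := ((fun t : ℝ => q ^ n * t) ⁻¹' s) ∩ Set.Ico q 1 with hM
  have hMm : MeasurableSet M :=
    ((measurable_const_mul (q ^ n)) hs).inter measurableSet_Ico
  have himg : (fun t : ℝ => q ^ n * t) '' M = s ∩ piece q n := by
    rw [hM, Set.image_inter hinj, Set.image_preimage_eq s hsurj, image_Ico_eq_piece hq0]
  have := hμ M hMm Set.inter_subset_right n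
  rw [himg] at this
  rw [this, hM, measure_inter_of_compl_null hμ₁supp]
  simp [smul_eq_mul]


open ENNReal in
lemma rpow_ofReal_pos {x : ℝ} (hx : 0 < x) : ENNReal.ofReal x ≠ 0 :=
  (ENNReal.ofReal_pos.mpr hx).ne'

section Transfer
variable (hq0 : 0 < q)
  (hμ₁supp : μ₁ (Set.Ico q 1)ᶜ = 0)
  (hμ : ∀ M : Set ℝ, MeasurableSet M → M ⊆ Set.Ico q 1 → ∀ n : ℤ,
      μ ((fun t => q ^ n * t) '' M) = ENNReal.ofReal (q ^ n) * μ₁ M)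

include hq0 hμ₁supp hμ

lemma setLIntegral_piece (g : ℝ → ℝ≥0∞) (n : ℤ) :
    ∫⁻ t in piece q n, g t ∂μ = ENNReal.ofReal (q ^ n) * ∫⁻ s, g (q ^ n * s) ∂μ₁ := by
  rw [restrict_piece hq0 hμ₁supp hμ n, lintegral_smul_measure,
    (measurableEmbedding_mulLeft₀ (zpow_pos hq0 n).ne').lintegral_map, smul_eq_mul]

lemma setIntegral_piece (g : ℝ → ℂ) (n : ℤ) :
    ∫ t in piece q n, g t ∂μ = (q ^ n) • ∫ s, g (q ^ n * s) ∂μ₁ := by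
  rw [restrict_piece hq0 hμ₁supp hμ n, integral_smul_measure,
    (measurableEmbedding_mulLeft₀ (zpow_pos hq0 n).ne').integral_map,
    ENNReal.toReal_ofReal (zpow_pos hq0 n).le]

lemma memℒp_comp_piece {f : ℝ → ℂ} (hf : MemLp f 2 μ) (n : ℤ) :
    MemLp (fun s => f (q ^ n * s)) 2 μ₁ := by
  have h1 : MemLp f 2 (μ.restrict (piece q n)) := hf.restrict _
  rw [restrict_piece hq0 hμ₁supp hμ n] at h1
  have h2 : MemLp f 2 (Measure.map (fun t => q ^ n * t) μ₁) := by
    have h3 := h1.smul_measure (c := (ENNReal.ofReal (q ^ n))⁻¹)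
      (by simp [rpow_ofReal_pos (zpow_pos hq0 n)])
    rwa [smul_smul, ENNReal.inv_mul_cancel (rpow_ofReal_pos (zpow_pos hq0 n))
      ENNReal.ofReal_ne_top, one_smul] at h3
  exact (measurableEmbedding_mulLeft₀ (zpow_pos hq0 n).ne').memLp_map_measure_iff.mp h2

lemma ae_piece {P : ℝ → Prop} (hP : ∀ᵐ t ∂μ, P t) (n : ℤ) : ∀ᵐ s ∂μ₁, P (q ^ n * s) := by
  have h1 : ∀ᵐ t ∂(μ.restrict (piece q n)), P t := ae_restrict_of_ae hP
  rw [restrict_piece hq0 hμ₁supp hμ n] at h1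
  have h2 : ∀ᵐ t ∂(Measure.map (fun t => q ^ n * t) μ₁), P t :=
    h1.filter_mono (Measure.absolutelyContinuous_smul
      (rpow_ofReal_pos (zpow_pos hq0 n))).ae_le
  exact ((measurableEmbedding_mulLeft₀ (zpow_pos hq0 n).ne').ae_map_iff).mp h2

end Transfer

lemma ae_mem_Ico (hμ₁supp : μ₁ (Set.Ico q 1)ᶜ = 0) : ∀ᵐ s ∂μ₁, s ∈ Set.Ico q 1 := by
  rw [ae_iff]
  exact hμ₁supp

lemma null_of_Ioi_subset (hμ0 : μ (Set.Ioi (0:ℝ))ᶜ = 0) {s : Set ℝ} (hs : Set.Ioi 0 ⊆ s) :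
    μ sᶜ = 0 :=
  measure_mono_null (Set.compl_subset_compl.mpr hs) hμ0

lemma ae_of_restrict_compl_null {ν : Measure ℝ} {U : Set ℝ} (hU : MeasurableSet U)
    (hc : ν Uᶜ = 0) {p : ℝ → Prop} (h : ∀ᵐ x ∂ν.restrict U, p x) : ∀ᵐ x ∂ν, p x := by
  rw [show ν = ν.restrict U + ν.restrict Uᶜ from (Measure.restrict_add_restrict_compl hU).symm,
    ae_add_measure_iff]
  refine ⟨h, ?_⟩
  rw [Measure.restrict_eq_zero.mpr hc]
  simp

lemma aesm_of_restrict_compl_null {ν : Measure ℝ} {U : Set ℝ} (hU : MeasurableSet U)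
    (hc : ν Uᶜ = 0) {f : ℝ → ℂ} (h : AEStronglyMeasurable f (ν.restrict U)) :
    AEStronglyMeasurable f ν := by
  rw [show ν = ν.restrict U + ν.restrict Uᶜ from (Measure.restrict_add_restrict_compl hU).symm]
  refine aestronglyMeasurable_add_measure_iff.mpr ⟨h, ?_⟩
  rw [Measure.restrict_eq_zero.mpr hc]
  exact aestronglyMeasurable_zero_measure f

def J (f : ℝ → ℂ) (ν : Measure ℝ) : ℝ≥0∞ := ∫⁻ x, (‖f x‖₊ : ℝ≥0∞) ^ (2:ℝ) ∂ν

lemma eLpNorm_eq_J (f : ℝ → ℂ) (ν : Measure ℝ) : eLpNorm f 2 ν = (J f ν) ^ (1/2 : ℝ) := by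
  rw [eLpNorm_eq_lintegral_rpow_enorm_toReal (by norm_num) (by norm_num)]
  norm_num [J]
  simp only [enorm_eq_nnnorm]

lemma memℒp_iff_J {f : ℝ → ℂ} {ν : Measure ℝ} :
    MemLp f 2 ν ↔ AEStronglyMeasurable f ν ∧ J f ν < ∞ := by
  rw [MemLp, eLpNorm_eq_J]
  refine and_congr Iff.rfl ?_
  rw [ENNReal.rpow_lt_top_iff_of_pos (by norm_num)]


open scoped Classical in
def Fcand (q : ℝ) (c : ℤ) (h : ℝ → ℂ) : ℝ → ℂ := fun t =>
  if t ∈ piece q (c-1) then -Complex.I * (t:ℂ)⁻¹ * h (q^(1-c) * t) else 0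

def Acoef (q : ℝ) (μ₁ : Measure ℝ) (h fc : ℝ → ℂ) (m : ℤ) : ℂ :=
  ∫ s : ℝ, (starRingEnd ℂ) (h s * (s:ℂ)⁻¹) * fc (q ^ m * s) ∂μ₁

section Core
variable [IsFiniteMeasure μ₁]
variable (hq0 : 0 < q) (hq1 : q < 1)
  (hμ₁supp : μ₁ (Set.Ico q 1)ᶜ = 0)
  (hμ0 : μ (Set.Ioi (0 : ℝ))ᶜ = 0)
  (hμ : ∀ M : Set ℝ, MeasurableSet M → M ⊆ Set.Ico q 1 → ∀ n : ℤ,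
      μ ((fun t => q ^ n * t) '' M) = ENNReal.ofReal (q ^ n) * μ₁ M)
  {h : ℝ → ℂ} (hh : MemLp h 2 μ₁)
  {c : ℤ} {g : ℝ → ℂ}
  (hg1 : ∀ k : ℕ, ∀ s ∈ Set.Ico q 1, g (q ^ (2 * (k:ℤ) + c) * s) = h s)
  (hg2 : ∀ t : ℝ, (∀ k : ℕ, t ∉ piece q (2 * (k:ℤ) + c)) → g t = 0)

include hq0 hq1 hμ₁supp hμ0 hμ hh hg1 hg2 in
lemma aesm_g : AEStronglyMeasurable g μ := by
  have hcover : Set.Ioi (0:ℝ) ⊆ ⋃ n : ℤ, piece q n := fun t ht =>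
    Set.mem_iUnion.mpr (exists_mem_piece hq0 hq1 ht)
  apply aesm_of_restrict_compl_null (MeasurableSet.iUnion fun n => measurableSet_piece q n)
    (null_of_Ioi_subset hμ0 hcover)
  rw [aestronglyMeasurable_iUnion_iff]
  intro n
  rw [restrict_piece hq0 hμ₁supp hμ n]
  have hemb := measurableEmbedding_mulLeft₀ (G₀ := ℝ) (zpow_pos hq0 n).ne'
  apply AEStronglyMeasurable.mono_ac Measure.smul_absolutelyContinuous
  rw [hemb.aestronglyMeasurable_map_iff]
  by_cases hn : ∃ k : ℕ, n = 2 * (k:ℤ) + c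
  · obtain ⟨k, rfl⟩ := hn
    exact hh.1.congr ((ae_mem_Ico hμ₁supp).mono fun s hs => (hg1 k s hs).symm)
  · refine (aestronglyMeasurable_const (b := (0:ℂ))).congr
      ((ae_mem_Ico hμ₁supp).mono fun s hs => ?_)
    refine (hg2 _ fun k hk => ?_).symm
    have hmem : q ^ n * s ∈ piece q n := (mem_piece_iff hq0).mpr ⟨s, hs, rfl⟩
    have hne : n ≠ 2*(k:ℤ)+c := fun he => hn ⟨k, he⟩
    exact (Set.disjoint_left.mp (piece_pairwise_disjoint hq0 hq1 hne) hmem) hk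

lemma zpow_two_mul_add (hq0 : 0 < q) (k : ℕ) (c : ℤ) :
    q ^ (2 * (k:ℤ) + c) = (q^2)^k * q^c := by
  rw [zpow_add₀ hq0.ne']
  congr 1
  rw [show (2*(k:ℤ)) = ((2*k : ℕ) : ℤ) by push_cast; ring, zpow_natCast, pow_mul]

include hq0 hq1 hμ₁supp hμ0 hμ hh hg1 hg2 in
lemma memℒp_g : MemLp g 2 μ := by
  rw [memℒp_iff_J]
  refine ⟨aesm_g hq0 hq1 hμ₁supp hμ0 hμ hh hg1 hg2, ?_⟩
  set Ug : Set ℝ := ⋃ k : ℕ, piece q (2*(k:ℤ)+c) with hUg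
  have hUgm : MeasurableSet Ug := MeasurableSet.iUnion fun _ => measurableSet_piece _ _
  have hzero : ∀ t ∉ Ug, (‖g t‖₊ : ℝ≥0∞) ^ (2:ℝ) = 0 := by
    intro t ht
    rw [hg2 t (fun k hk => ht (Set.mem_iUnion.mpr ⟨k, hk⟩))]
    simp [ENNReal.zero_rpow_of_pos]
  have hsplit : J g μ = ∫⁻ t in Ug, (‖g t‖₊ : ℝ≥0∞) ^ (2:ℝ) ∂μ := by
    rw [J, ← lintegral_add_compl (μ := μ) _ hUgm]
    have hz : ∫⁻ t in Ugᶜ, (‖g t‖₊:ℝ≥0∞)^(2:ℝ) ∂μ = 0 := by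
      rw [setLIntegral_congr_fun hUgm.compl (fun t ht => hzero t ht)]
      simp
    rw [hz, add_zero]
  rw [hsplit]
  have hdisj : Pairwise (Function.onFun Disjoint fun k : ℕ => piece q (2*(k:ℤ)+c)) :=
    fun i j hij => piece_pairwise_disjoint hq0 hq1 (fun he => hij (by omega))
  rw [hUg, lintegral_iUnion (fun k => measurableSet_piece _ _) hdisj]
  have heach : ∀ k : ℕ, ∫⁻ t in piece q (2*(k:ℤ)+c), (‖g t‖₊:ℝ≥0∞)^(2:ℝ) ∂μ
      = ENNReal.ofReal (q ^ (2*(k:ℤ)+c)) * J h μ₁ := by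
    intro k
    rw [setLIntegral_piece hq0 hμ₁supp hμ _ _]
    congr 1
    refine lintegral_congr_ae ((ae_mem_Ico hμ₁supp).mono fun s hs => ?_)
    dsimp only
    rw [hg1 k s hs]
  simp_rw [heach]
  rw [ENNReal.tsum_mul_right]
  have hterm : ∀ k : ℕ, ENNReal.ofReal (q ^ (2*(k:ℤ)+c))
      = (ENNReal.ofReal (q^2))^k * ENNReal.ofReal (q^c) := by
    intro k
    rw [zpow_two_mul_add hq0, ENNReal.ofReal_mul (by positivity), ENNReal.ofReal_pow (by positivity)]
  simp_rw [hterm]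
  rw [ENNReal.tsum_mul_right, ENNReal.tsum_geometric]
  have h1 : (1 - ENNReal.ofReal (q^2))⁻¹ ≠ ⊤ := by
    rw [Ne, ENNReal.inv_eq_top, tsub_eq_zero_iff_le]
    exact fun hcon => absurd (lt_of_lt_of_le (ENNReal.ofReal_lt_one.mpr (by nlinarith)) hcon)
      (lt_irrefl _)
  have h2 : J h μ₁ ≠ ⊤ := (memℒp_iff_J.mp hh).2.ne
  exact ENNReal.mul_lt_top (ENNReal.mul_lt_top h1.lt_top ENNReal.ofReal_lt_top) h2.lt_top

include hq0 hμ₁supp hh in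
lemma memℒp_hinv : MemLp (fun s : ℝ => (s:ℂ)⁻¹ * h s) 2 μ₁ := by
  have haesm : AEStronglyMeasurable (fun s : ℝ => ((s:ℝ):ℂ)⁻¹ * h s) μ₁ :=
    (Complex.measurable_ofReal.inv.aestronglyMeasurable).mul hh.1
  refine MemLp.of_le_mul (c := q⁻¹) hh haesm ((ae_mem_Ico hμ₁supp).mono fun s hs => ?_)
  rw [norm_mul]
  have hs0 : 0 < s := lt_of_lt_of_le hq0 hs.1
  have hle : ‖((s:ℝ):ℂ)⁻¹‖ ≤ q⁻¹ := by
    rw [norm_inv, Complex.norm_real, Real.norm_eq_abs, abs_of_pos hs0]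
    exact inv_anti₀ hq0 hs.1
  exact mul_le_mul_of_nonneg_right hle (norm_nonneg (h s))

include hq0 hμ₁supp hμ hh in
lemma memℒp_F : MemLp (Fcand q c h) 2 μ := by
  have hFind : Fcand q c h = (piece q (c-1)).indicator (Fcand q c h) := by
    funext t
    by_cases ht : t ∈ piece q (c-1)
    · rw [Set.indicator_of_mem ht]
    · rw [Set.indicator_of_notMem ht]
      simp only [Fcand, if_neg ht]
  rw [hFind, memLp_indicator_iff_restrict (measurableSet_piece _ _),
    restrict_piece hq0 hμ₁supp hμ (c-1)]
  refine MemLp.smul_measure ?_ ENNReal.ofReal_ne_top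
  rw [(measurableEmbedding_mulLeft₀ (zpow_pos hq0 (c-1)).ne').memLp_map_measure_iff]
  have hG : MemLp (fun s : ℝ => (-Complex.I * ((q^(c-1):ℝ):ℂ)⁻¹) * ((s:ℂ)⁻¹ * h s)) 2 μ₁ :=
    (memℒp_hinv hq0 hμ₁supp hh).const_mul _
  refine hG.ae_eq ((ae_mem_Ico hμ₁supp).mono fun s hs => ?_)
  have hs0 : 0 < s := lt_of_lt_of_le hq0 hs.1
  have hmem : q^(c-1) * s ∈ piece q (c-1) := (mem_piece_iff hq0).mpr ⟨s, hs, rfl⟩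
  have harg : q^(1-c) * (q^(c-1) * s) = s := by
    rw [← mul_assoc, ← zpow_add₀ hq0.ne']
    norm_num
  show (-Complex.I * ((q^(c-1):ℝ):ℂ)⁻¹) * ((s:ℂ)⁻¹ * h s) = Fcand q c h (q^(c-1) * s)
  rw [Fcand, if_pos hmem, harg]
  push_cast [mul_inv]
  ring

end Core

section Core2
variable [IsFiniteMeasure μ₁]
variable (hq0 : 0 < q) (hq1 : q < 1)
  (hμ₁supp : μ₁ (Set.Ico q 1)ᶜ = 0)
  (hμ : ∀ M : Set ℝ, MeasurableSet M → M ⊆ Set.Ico q 1 → ∀ n : ℤ,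
      μ ((fun t => q ^ n * t) '' M) = ENNReal.ofReal (q ^ n) * μ₁ M)
  {h : ℝ → ℂ} (hh : MemLp h 2 μ₁)
  {fc : ℝ → ℂ} (hfc : MemLp fc 2 μ)

include hq0 hμ₁supp hμ hh hfc in
lemma integrable_Acoef (m : ℤ) :
    Integrable (fun s : ℝ => (starRingEnd ℂ) (h s * (s:ℂ)⁻¹) * fc (q ^ m * s)) μ₁ := by
  have hu := memℒp_hinv hq0 hμ₁supp hh
  have hv := memℒp_comp_piece hq0 hμ₁supp hμ hfc m
  refine (L2.integrable_inner (𝕜 := ℂ) (hu.toLp _) (hv.toLp _)).congr ?_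
  filter_upwards [hu.coeFn_toLp, hv.coeFn_toLp] with s h1 h2
  rw [RCLike.inner_apply, h1, h2]
  rw [map_mul, map_mul]
  ring

include hq0 hμ₁supp hμ hfc in
lemma J_comp_le (m : ℤ) :
    J (fun s : ℝ => fc (q ^ m * s)) μ₁
      ≤ ENNReal.ofReal (q^m) * J (fun t : ℝ => (t:ℂ)⁻¹ * fc t) μ := by
  set P := ENNReal.ofReal (q^m) with hP
  have hP0 : P ≠ 0 := rpow_ofReal_pos (zpow_pos hq0 m)
  have hPt : P ≠ ⊤ := ENNReal.ofReal_ne_top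
  have hP2 : P ^ (2:ℝ) = P * P := by
    rw [show (2:ℝ) = ((2:ℕ):ℝ) by norm_num, ENNReal.rpow_natCast, pow_two]
  have h1 := setLIntegral_piece hq0 hμ₁supp hμ (fun t => (‖fc t‖₊:ℝ≥0∞)^(2:ℝ)) m
  have key : ∫⁻ t in piece q m, (‖fc t‖₊:ℝ≥0∞)^(2:ℝ) ∂μ
      ≤ P * (P * J (fun t : ℝ => (t:ℂ)⁻¹ * fc t) μ) := by
    calc ∫⁻ t in piece q m, (‖fc t‖₊:ℝ≥0∞)^(2:ℝ) ∂μ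
        ≤ ∫⁻ t in piece q m, P^(2:ℝ) * (‖((t:ℝ):ℂ)⁻¹ * fc t‖₊:ℝ≥0∞)^(2:ℝ) ∂μ := by
          refine lintegral_mono_ae (((ae_restrict_mem (measurableSet_piece q m))).mono
            fun t ht => ?_)
          have ht0 : 0 < t := piece_subset_Ioi hq0 m ht
          have htne : ((t:ℝ):ℂ) ≠ 0 := by exact_mod_cast ht0.ne'
          have hnorm : ‖fc t‖ ≤ q^m * ‖((t:ℝ):ℂ)⁻¹ * fc t‖ := by
            calc ‖fc t‖ = ‖((t:ℝ):ℂ) * (((t:ℝ):ℂ)⁻¹ * fc t)‖ := by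
                  rw [← mul_assoc, mul_inv_cancel₀ htne, one_mul]
              _ = |t| * ‖((t:ℝ):ℂ)⁻¹ * fc t‖ := by
                  rw [norm_mul, Complex.norm_real, Real.norm_eq_abs]
              _ ≤ q^m * ‖((t:ℝ):ℂ)⁻¹ * fc t‖ := by
                  refine mul_le_mul_of_nonneg_right ?_ (norm_nonneg _)
                  rw [abs_of_pos ht0]; exact ht.2.le
          calc (‖fc t‖₊:ℝ≥0∞)^(2:ℝ)
              ≤ (ENNReal.ofReal (q^m * ‖((t:ℝ):ℂ)⁻¹ * fc t‖))^(2:ℝ) := by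
                rw [← enorm_eq_nnnorm, ← ofReal_norm]
                exact ENNReal.rpow_le_rpow (ENNReal.ofReal_le_ofReal hnorm) (by norm_num)
            _ = (P * (‖((t:ℝ):ℂ)⁻¹ * fc t‖₊:ℝ≥0∞))^(2:ℝ) := by
                rw [ENNReal.ofReal_mul (zpow_pos hq0 m).le, ofReal_norm, enorm_eq_nnnorm]
            _ = P^(2:ℝ) * (‖((t:ℝ):ℂ)⁻¹ * fc t‖₊:ℝ≥0∞)^(2:ℝ) :=
                ENNReal.mul_rpow_of_nonneg _ _ (by norm_num)
      _ = P^(2:ℝ) * ∫⁻ t in piece q m, (‖((t:ℝ):ℂ)⁻¹ * fc t‖₊:ℝ≥0∞)^(2:ℝ) ∂μ :=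
          lintegral_const_mul' _ _ (ENNReal.rpow_ne_top_of_nonneg (by norm_num) hPt)
      _ ≤ P^(2:ℝ) * J (fun t : ℝ => (t:ℂ)⁻¹ * fc t) μ := by
          gcongr
          exact lintegral_mono' Measure.restrict_le_self le_rfl
      _ = P * (P * J (fun t : ℝ => (t:ℂ)⁻¹ * fc t) μ) := by rw [hP2, mul_assoc]
  refine (ENNReal.mul_le_mul_iff_right hP0 hPt).mp ?_
  calc P * J (fun s : ℝ => fc (q^m*s)) μ₁
      = ∫⁻ t in piece q m, (‖fc t‖₊:ℝ≥0∞)^(2:ℝ) ∂μ := by rw [h1]; rfl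
    _ ≤ P * (P * J (fun t : ℝ => (t:ℂ)⁻¹ * fc t) μ) := key

include hq0 hμ₁supp hμ hh hfc in
lemma norm_Acoef_le (hXfc : MemLp (fun t : ℝ => (t:ℂ)⁻¹ * fc t) 2 μ) (m : ℤ) :
    ‖Acoef q μ₁ h fc m‖ ≤ (eLpNorm (fun s : ℝ => (s:ℂ)⁻¹ * h s) 2 μ₁).toReal *
      Real.sqrt (q^m * (J (fun t : ℝ => (t:ℂ)⁻¹ * fc t) μ).toReal) := by
  set Df := J (fun t : ℝ => (t:ℂ)⁻¹ * fc t) μ with hDf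
  have hDft : Df ≠ ⊤ := (memℒp_iff_J.mp hXfc).2.ne
  have hu := memℒp_hinv hq0 hμ₁supp hh
  have hv := memℒp_comp_piece hq0 hμ₁supp hμ hfc m
  have hinner : Acoef q μ₁ h fc m = inner (𝕜 := ℂ) (hu.toLp _) (hv.toLp _) := by
    rw [L2.inner_def, Acoef]
    refine integral_congr_ae ?_
    filter_upwards [hu.coeFn_toLp, hv.coeFn_toLp] with s h1 h2
    rw [RCLike.inner_apply, h1, h2]
    rw [map_mul, map_mul]
    ring
  have hP0 : (0:ℝ) < q^m := zpow_pos hq0 m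
  calc ‖Acoef q μ₁ h fc m‖ = ‖inner (𝕜 := ℂ) (hu.toLp _) (hv.toLp _)‖ := by rw [hinner]
    _ ≤ ‖hu.toLp _‖ * ‖hv.toLp _‖ := norm_inner_le_norm _ _
    _ ≤ _ := by
        rw [Lp.norm_toLp, Lp.norm_toLp]
        refine mul_le_mul_of_nonneg_left ?_ ENNReal.toReal_nonneg
        have h3 : eLpNorm (fun s : ℝ => fc (q^m*s)) 2 μ₁
            ≤ (ENNReal.ofReal (q^m) * Df)^(1/2:ℝ) := by
          rw [eLpNorm_eq_J]
          exact ENNReal.rpow_le_rpow (J_comp_le hq0 hμ₁supp hμ hfc m) (by norm_num)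
        have h4 := ENNReal.toReal_mono
          (ENNReal.rpow_ne_top_of_nonneg (by norm_num)
            (ENNReal.mul_ne_top ENNReal.ofReal_ne_top hDft)) h3
        refine h4.trans (le_of_eq ?_)
        rw [← ENNReal.toReal_rpow, ENNReal.toReal_mul, ENNReal.toReal_ofReal hP0.le,
          Real.sqrt_eq_rpow]

include hq0 hq1 hμ₁supp hμ hh hfc in
lemma tendsto_Acoef (hXfc : MemLp (fun t : ℝ => (t:ℂ)⁻¹ * fc t) 2 μ) (c : ℤ) :
    Tendsto (fun k : ℕ => Acoef q μ₁ h fc (2*(k:ℤ)+c)) atTop (𝓝 0) := by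
  rw [tendsto_zero_iff_norm_tendsto_zero]
  set C := (eLpNorm (fun s : ℝ => (s:ℂ)⁻¹ * h s) 2 μ₁).toReal with hC
  set D := (J (fun t : ℝ => (t:ℂ)⁻¹ * fc t) μ).toReal with hD
  refine squeeze_zero (fun k => norm_nonneg _)
    (fun k => norm_Acoef_le hq0 hμ₁supp hμ hh hfc hXfc (2*(k:ℤ)+c)) ?_
  have h1 : Tendsto (fun k : ℕ => q^(2*(k:ℤ)+c) * D) atTop (𝓝 0) := by
    have h0 := tendsto_pow_atTop_nhds_zero_of_lt_one (by positivity : (0:ℝ) ≤ q^2)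
      (by nlinarith : q^2 < 1)
    have := h0.mul_const (q^c * D)
    rw [zero_mul] at this
    refine this.congr fun k => ?_
    rw [zpow_two_mul_add hq0]
    ring
  have h2 : Tendsto (fun k : ℕ => Real.sqrt (q^(2*(k:ℤ)+c) * D)) atTop (𝓝 0) := by
    have := (Real.continuous_sqrt.tendsto 0).comp h1
    simpa [Function.comp_def] using this
  have h3 := h2.const_mul C
  rw [mul_zero] at h3
  exact h3.congr fun k => rfl

end Core2

lemma cancel_aux {w : ℂ} (hw : w ≠ 0) (W : ℂ) : w * (Complex.I * w⁻¹ * W) = Complex.I * W := by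
  field_simp

section Pairing
variable [IsFiniteMeasure μ₁]
variable (hq0 : 0 < q) (hq1 : q < 1)
  (hμ₁supp : μ₁ (Set.Ico q 1)ᶜ = 0)
  (hμ : ∀ M : Set ℝ, MeasurableSet M → M ⊆ Set.Ico q 1 → ∀ n : ℤ,
      μ ((fun t => q ^ n * t) '' M) = ENNReal.ofReal (q ^ n) * μ₁ M)
  {h : ℝ → ℂ} (hh : MemLp h 2 μ₁)
  {c : ℤ} {g : ℝ → ℂ}
  (hg1 : ∀ k : ℕ, ∀ s ∈ Set.Ico q 1, g (q ^ (2 * (k:ℤ) + c) * s) = h s)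
  (hg2 : ∀ t : ℝ, (∀ k : ℕ, t ∉ piece q (2 * (k:ℤ) + c)) → g t = 0)

include hq0 hμ₁supp hμ hh in
lemma pairing_left {fc : ℝ → ℂ} (hfc : MemLp fc 2 μ) :
    ∫ t, (starRingEnd ℂ) (Fcand q c h t) * fc t ∂μ
      = Complex.I * Acoef q μ₁ h fc (c-1) := by
  have hzero : ∀ t ∉ piece q (c-1), (starRingEnd ℂ) (Fcand q c h t) * fc t = 0 := by
    intro t ht
    simp only [Fcand, if_neg ht, map_zero, zero_mul]
  rw [← setIntegral_eq_integral_of_forall_compl_eq_zero hzero,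
    setIntegral_piece hq0 hμ₁supp hμ _ (c-1)]
  have hqm : ((q^(c-1):ℝ):ℂ) ≠ 0 := by exact_mod_cast (zpow_pos hq0 (c-1)).ne'
  have hcongr : ∫ s : ℝ, ((starRingEnd ℂ) (Fcand q c h (q^(c-1)*s)) * fc (q^(c-1)*s)) ∂μ₁
      = ∫ s : ℝ, (Complex.I * ((q^(c-1):ℝ):ℂ)⁻¹) *
          ((starRingEnd ℂ) (h s * (s:ℂ)⁻¹) * fc (q^(c-1)*s)) ∂μ₁ := by
    refine integral_congr_ae ((ae_mem_Ico hμ₁supp).mono fun s hsI => ?_)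
    have hs0 : (0:ℝ) < s := lt_of_lt_of_le hq0 hsI.1
    have hmem : q^(c-1) * s ∈ piece q (c-1) := (mem_piece_iff hq0).mpr ⟨s, hsI, rfl⟩
    have harg : q^(1-c) * (q^(c-1) * s) = s := by
      rw [← mul_assoc, ← zpow_add₀ hq0.ne']
      norm_num
    simp only [Fcand, if_pos hmem, harg]
    simp only [map_mul, map_neg, map_inv₀, Complex.conj_I, Complex.conj_ofReal]
    push_cast [mul_inv]
    ring
  rw [hcongr, integral_const_mul, Complex.real_smul, cancel_aux hqm]
  rfl

include hq0 hq1 hμ₁supp hμ hh hg1 hg2 in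
lemma pairing {fc Xfc : ℝ → ℂ} (hfc : MemLp fc 2 μ)
    (hXfc : MemLp (fun t : ℝ => (t:ℂ)⁻¹ * fc t) 2 μ)
    (hInt : Integrable (fun t => (starRingEnd ℂ) (g t) * Xfc t) μ)
    (hXeq : ∀ᵐ t ∂μ, Xfc t = Complex.I * (t:ℂ)⁻¹ * (fc (q⁻¹ * t) - fc (q * t))) :
    ∫ t, (starRingEnd ℂ) (g t) * Xfc t ∂μ = Complex.I * Acoef q μ₁ h fc (c-1) := by
  set Φ : ℝ → ℂ := fun t => (starRingEnd ℂ) (g t) * Xfc t with hΦ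
  set aa : ℕ → ℂ := fun k => Complex.I * Acoef q μ₁ h fc (2*(k:ℤ)+(c-1)) with haa
  set Ug : Set ℝ := ⋃ k : ℕ, piece q (2*(k:ℤ)+c) with hUg
  have hUm : ∀ k : ℕ, MeasurableSet (piece q (2*(k:ℤ)+c)) := fun k => measurableSet_piece _ _
  have hdisj : Pairwise (Function.onFun Disjoint fun k : ℕ => piece q (2*(k:ℤ)+c)) :=
    fun i j hij => piece_pairwise_disjoint hq0 hq1 (fun he => hij (by omega))
  have hzero : ∀ t ∉ Ug, Φ t = 0 := by
    intro t ht
    simp only [hΦ]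
    rw [hg2 t (fun k hk => ht (Set.mem_iUnion.mpr ⟨k, hk⟩)), map_zero, zero_mul]
  have hstep1 : ∫ t, Φ t ∂μ = ∫ t in Ug, Φ t ∂μ :=
    (setIntegral_eq_integral_of_forall_compl_eq_zero hzero).symm
  have hHS : HasSum (fun k : ℕ => ∫ t in piece q (2*(k:ℤ)+c), Φ t ∂μ) (∫ t in Ug, Φ t ∂μ) :=
    hasSum_integral_iUnion hUm hdisj hInt.integrableOn
  have hpp : ∀ k : ℕ, ∫ t in piece q (2*(k:ℤ)+c), Φ t ∂μ = aa k - aa (k+1) := by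
    intro k
    have hqm : ((q^(2*(k:ℤ)+c):ℝ):ℂ) ≠ 0 := by
      exact_mod_cast (zpow_pos hq0 (2*(k:ℤ)+c)).ne'
    rw [setIntegral_piece hq0 hμ₁supp hμ Φ (2*(k:ℤ)+c)]
    have hXs := ae_piece hq0 hμ₁supp hμ hXeq (2*(k:ℤ)+c)
    have hcongr : ∫ s : ℝ, Φ (q^(2*(k:ℤ)+c) * s) ∂μ₁
        = ∫ s : ℝ, (Complex.I * ((q^(2*(k:ℤ)+c):ℝ):ℂ)⁻¹) *
            ((starRingEnd ℂ) (h s * (s:ℂ)⁻¹) *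
              (fc (q^(2*(k:ℤ)+(c-1)) * s) - fc (q^(2*((k+1:ℕ):ℤ)+(c-1)) * s))) ∂μ₁ := by
      refine integral_congr_ae ?_
      filter_upwards [hXs, ae_mem_Ico hμ₁supp] with s hXse hsI
      have hs0 : (0:ℝ) < s := lt_of_lt_of_le hq0 hsI.1
      have e1 : q⁻¹ * (q^(2*(k:ℤ)+c) * s) = q^(2*(k:ℤ)+(c-1)) * s := by
        rw [← mul_assoc, mul_comm q⁻¹, ← zpow_sub_one₀ hq0.ne',
          show (2*(k:ℤ)+c-1) = 2*(k:ℤ)+(c-1) by ring]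
      have e2 : q * (q^(2*(k:ℤ)+c) * s) = q^(2*((k+1:ℕ):ℤ)+(c-1)) * s := by
        rw [← mul_assoc, mul_comm q, ← zpow_add_one₀ hq0.ne',
          show (2*(k:ℤ)+c+1) = 2*((k+1:ℕ):ℤ)+(c-1) by push_cast; ring]
      simp only [hΦ]
      rw [hXse, e1, e2, hg1 k s hsI]
      simp only [map_mul, map_inv₀, Complex.conj_ofReal]
      push_cast [mul_inv]
      ring
    rw [hcongr, integral_const_mul, Complex.real_smul, cancel_aux hqm]
    have hsplit2 : ∫ s : ℝ, (starRingEnd ℂ) (h s * (s:ℂ)⁻¹) *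
          (fc (q^(2*(k:ℤ)+(c-1)) * s) - fc (q^(2*((k+1:ℕ):ℤ)+(c-1)) * s)) ∂μ₁
        = Acoef q μ₁ h fc (2*(k:ℤ)+(c-1)) - Acoef q μ₁ h fc (2*((k+1:ℕ):ℤ)+(c-1)) := by
      rw [Acoef, Acoef, ← integral_sub
        (integrable_Acoef hq0 hμ₁supp hμ hh hfc (2*(k:ℤ)+(c-1)))
        (integrable_Acoef hq0 hμ₁supp hμ hh hfc (2*((k+1:ℕ):ℤ)+(c-1)))]
      refine integral_congr_ae (ae_of_all _ fun s => ?_)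
      simp only [mul_sub]
    rw [hsplit2, mul_sub]
  have hEnd : ∫ t in Ug, Φ t ∂μ = aa 0 := by
    have h2 : Tendsto (fun n : ℕ => aa 0 - aa n) atTop (𝓝 (aa 0)) := by
      have hA := tendsto_Acoef hq0 hq1 hμ₁supp hμ hh hfc hXfc (c-1)
      have hA2 : Tendsto aa atTop (𝓝 0) := by
        have := hA.const_mul Complex.I
        rw [mul_zero] at this
        exact this.congr fun k => rfl
      simpa using tendsto_const_nhds.sub hA2
    refine tendsto_nhds_unique ?_ h2
    have htend1 := hHS.tendsto_sum_nat
    have heq : (fun n : ℕ => ∑ k ∈ Finset.range n, ∫ t in piece q (2*(k:ℤ)+c), Φ t ∂μ)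
        = fun n : ℕ => aa 0 - aa n := by
      funext n
      rw [Finset.sum_congr rfl (fun k _ => hpp k), Finset.sum_range_sub' aa n]
    rw [heq] at htend1
    exact htend1
  rw [hstep1, hEnd, haa]
  simp only [Nat.cast_zero, mul_zero, zero_add]

end Pairing

section DenseDom
variable (hq0 : 0 < q) (hq1 : q < 1) (hμ0 : μ (Set.Ioi (0 : ℝ))ᶜ = 0)
  (X : Lp ℂ 2 μ →ₗ.[ℂ] Lp ℂ 2 μ)
  (hXdom : ∀ f : Lp ℂ 2 μ, f ∈ X.domain ↔ MemLp (fun t : ℝ => (t : ℂ)⁻¹ * f t) 2 μ)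

include hq0 hq1 hμ0 hXdom in
lemma dense_domain : Dense (X.domain : Set (Lp ℂ 2 μ)) := by
  rw [Submodule.dense_iff_topologicalClosure_eq_top, Submodule.topologicalClosure_eq_top_iff,
    Submodule.eq_bot_iff]
  intro g hg
  rw [Submodule.mem_orthogonal] at hg
  have key : ∀ N : ℕ, ∀ᵐ t ∂(μ.restrict (Set.Icc (q^(N:ℤ)) (q^(-(N:ℤ))))), (g : ℝ → ℂ) t = 0 := by
    intro N
    set A : Set ℝ := Set.Icc (q^(N:ℤ)) (q^(-(N:ℤ))) with hA
    have hAm : MeasurableSet A := measurableSet_Icc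
    have hgN : MemLp (A.indicator (⇑g)) 2 μ := (Lp.memLp g).indicator hAm
    have hdom : hgN.toLp _ ∈ X.domain := by
      rw [hXdom]
      have haesm : AEStronglyMeasurable
          (fun t : ℝ => ((t:ℝ):ℂ)⁻¹ * (hgN.toLp _ : Lp ℂ 2 μ) t) μ :=
        (Complex.measurable_ofReal.inv.aestronglyMeasurable).mul (Lp.aestronglyMeasurable _)
      refine MemLp.of_le_mul (c := q^(-(N:ℤ))) (Lp.memLp g) haesm ?_
      filter_upwards [hgN.coeFn_toLp] with t ht
      rw [ht]
      by_cases htA : t ∈ A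
      · rw [Set.indicator_of_mem htA, norm_mul]
        have ht0 : (0:ℝ) < t := lt_of_lt_of_le (zpow_pos hq0 _) htA.1
        have hle : ‖((t:ℝ):ℂ)⁻¹‖ ≤ q^(-(N:ℤ)) := by
          rw [norm_inv, Complex.norm_real, Real.norm_eq_abs, abs_of_pos ht0, zpow_neg]
          exact inv_anti₀ (zpow_pos hq0 _) htA.1
        exact mul_le_mul_of_nonneg_right hle (norm_nonneg _)
      · rw [Set.indicator_of_notMem htA, mul_zero, norm_zero]
        positivity
    have horth := hg _ hdom
    rw [L2.inner_def] at horth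
    have hID : ∫ t, inner (𝕜 := ℂ) ((hgN.toLp _ : Lp ℂ 2 μ) t) ((g : Lp ℂ 2 μ) t) ∂μ
        = ∫ t in A, ((Complex.normSq ((g : Lp ℂ 2 μ) t) : ℝ) : ℂ) ∂μ := by
      rw [← integral_indicator hAm]
      refine integral_congr_ae ?_
      filter_upwards [hgN.coeFn_toLp] with t ht
      rw [RCLike.inner_apply, ht]
      by_cases htA : t ∈ A
      · rw [Set.indicator_of_mem htA, Set.indicator_of_mem htA,
          Complex.mul_conj]
      · rw [Set.indicator_of_notMem htA, Set.indicator_of_notMem htA, map_zero, mul_zero]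
    rw [hID] at horth
    have hreal : ∫ t in A, Complex.normSq ((g : Lp ℂ 2 μ) t) ∂μ = 0 := by
      have h2 : ((∫ t in A, Complex.normSq ((g : Lp ℂ 2 μ) t) ∂μ : ℝ) : ℂ) = 0 :=
        (integral_ofReal (𝕜 := ℂ)).symm.trans horth
      exact_mod_cast h2
    have hint : Integrable (fun t => Complex.normSq ((g : Lp ℂ 2 μ) t)) (μ.restrict A) := by
      have h1 := (L2.integrable_inner (𝕜 := ℂ) g g).restrict (s := A)
      refine (h1.re).congr (ae_of_all _ fun t => ?_)
      dsimp only
      rw [RCLike.inner_apply, Complex.mul_conj]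
      simp
    have hz := (integral_eq_zero_iff_of_nonneg_ae
      (ae_of_all _ fun t => Complex.normSq_nonneg ((g : Lp ℂ 2 μ) t)) hint).mp hreal
    filter_upwards [hz] with t ht
    exact Complex.normSq_eq_zero.mp ht
  have hcov : Set.Ioi (0:ℝ) ⊆ ⋃ N : ℕ, Set.Icc (q^(N:ℤ)) (q^(-(N:ℤ))) := by
    intro t ht
    have htpos : (0:ℝ) < t := ht
    obtain ⟨N, hN⟩ := exists_pow_lt_of_lt_one (lt_min htpos (inv_pos.mpr htpos)) hq1
    refine Set.mem_iUnion.mpr ⟨N, ?_, ?_⟩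
    · rw [zpow_natCast]
      exact (lt_of_lt_of_le hN (min_le_left _ _)).le
    · have h2 : q^N < t⁻¹ := lt_of_lt_of_le hN (min_le_right _ _)
      have h3 : t * q^N < 1 := by
        have := mul_lt_mul_of_pos_left h2 htpos
        rwa [mul_inv_cancel₀ htpos.ne'] at this
      rw [zpow_neg, zpow_natCast]
      have hp : (0:ℝ) < q^N := pow_pos hq0 N
      nlinarith [mul_inv_cancel₀ hp.ne']
  have hae : ∀ᵐ t ∂μ, (g : ℝ → ℂ) t = 0 := by
    refine ae_of_restrict_compl_null (MeasurableSet.iUnion fun N => measurableSet_Icc)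
      (null_of_Ioi_subset hμ0 hcov) ?_
    rw [ae_restrict_iUnion_iff]
    exact key
  exact Lp.eq_zero_iff_ae_eq_zero.mpr hae

end DenseDom

section Assemble
variable [IsFiniteMeasure μ₁]
variable (hq0 : 0 < q) (hq1 : q < 1)
  (hμ₁supp : μ₁ (Set.Ico q 1)ᶜ = 0)
  (hμ0 : μ (Set.Ioi (0 : ℝ))ᶜ = 0)
  (hμ : ∀ M : Set ℝ, MeasurableSet M → M ⊆ Set.Ico q 1 → ∀ n : ℤ,
      μ ((fun t => q ^ n * t) '' M) = ENNReal.ofReal (q ^ n) * μ₁ M)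
  (X : Lp ℂ 2 μ →ₗ.[ℂ] Lp ℂ 2 μ)
  (hXdom : ∀ f : Lp ℂ 2 μ, f ∈ X.domain ↔ MemLp (fun t : ℝ => (t : ℂ)⁻¹ * f t) 2 μ)
  (hX : ∀ f : X.domain, ∀ᵐ t ∂μ,
      (X f) t = Complex.I * (t : ℂ)⁻¹ *
        ((f : Lp ℂ 2 μ) (q⁻¹ * t) - (f : Lp ℂ 2 μ) (q * t)))
  {h : ℝ → ℂ} (hh : MemLp h 2 μ₁)
  {c : ℤ} {g : ℝ → ℂ}
  (hg1 : ∀ k : ℕ, ∀ s ∈ Set.Ico q 1, g (q ^ (2 * (k:ℤ) + c) * s) = h s)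
  (hg2 : ∀ t : ℝ, (∀ k : ℕ, t ∉ piece q (2 * (k:ℤ) + c)) → g t = 0)

include hq0 hq1 hμ₁supp hμ0 hμ hXdom hX hh hg1 hg2 in
lemma core :
    ∃ gL : Lp ℂ 2 μ, (∀ᵐ t ∂μ, gL t = g t) ∧ ∃ hmem : gL ∈ X.adjoint.domain,
      ∀ᵐ t ∂μ, (X.adjoint ⟨gL, hmem⟩) t = Fcand q c h t := by
  have hdense := dense_domain hq0 hq1 hμ0 X hXdom
  have hgm := memℒp_g hq0 hq1 hμ₁supp hμ0 hμ hh hg1 hg2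
  have hFm := memℒp_F (c := c) hq0 hμ₁supp hμ hh
  have hx₀ : ∀ f : X.domain, inner (𝕜 := ℂ) (hFm.toLp _) ((f : Lp ℂ 2 μ))
      = inner (𝕜 := ℂ) (hgm.toLp g) (X f) := by
    intro f
    have hfc : MemLp (⇑(f : Lp ℂ 2 μ)) 2 μ := Lp.memLp _
    have hXfc : MemLp (fun t : ℝ => (t:ℂ)⁻¹ * (f : Lp ℂ 2 μ) t) 2 μ := (hXdom _).mp f.2
    have hInt : Integrable (fun t => (starRingEnd ℂ) (g t) * (X f : Lp ℂ 2 μ) t) μ := by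
      refine (L2.integrable_inner (𝕜 := ℂ) (hgm.toLp g) (X f)).congr ?_
      filter_upwards [hgm.coeFn_toLp] with t ht
      rw [RCLike.inner_apply, ht, mul_comm]
    have hL := pairing_left (c := c) hq0 hμ₁supp hμ hh hfc
    have hR := pairing hq0 hq1 hμ₁supp hμ hh hg1 hg2 hfc hXfc hInt (hX f)
    rw [L2.inner_def, L2.inner_def]
    calc ∫ t, inner (𝕜 := ℂ) ((hFm.toLp _ : Lp ℂ 2 μ) t) ((f : Lp ℂ 2 μ) t) ∂μ
        = ∫ t, (starRingEnd ℂ) (Fcand q c h t) * (f : Lp ℂ 2 μ) t ∂μ := by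
          refine integral_congr_ae ?_
          filter_upwards [hFm.coeFn_toLp] with t ht
          rw [RCLike.inner_apply, ht, mul_comm]
      _ = Complex.I * Acoef q μ₁ h (⇑(f : Lp ℂ 2 μ)) (c-1) := hL
      _ = ∫ t, (starRingEnd ℂ) (g t) * (X f : Lp ℂ 2 μ) t ∂μ := hR.symm
      _ = ∫ t, inner (𝕜 := ℂ) ((hgm.toLp g : Lp ℂ 2 μ) t) ((X f : Lp ℂ 2 μ) t) ∂μ := by
          refine integral_congr_ae ?_
          filter_upwards [hgm.coeFn_toLp] with t ht
          rw [RCLike.inner_apply, ht, mul_comm]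
  have hmem : hgm.toLp g ∈ X.adjoint.domain :=
    LinearPMap.mem_adjoint_domain_of_exists _ ⟨hFm.toLp _, hx₀⟩
  refine ⟨hgm.toLp g, hgm.coeFn_toLp, hmem, ?_⟩
  have happ : X.adjoint ⟨hgm.toLp g, hmem⟩ = hFm.toLp _ :=
    LinearPMap.adjoint_apply_eq hdense _ (fun f => hx₀ f)
  rw [happ]
  exact hFm.coeFn_toLp

end Assemble
end S5
end


/-- `he` is the "even extension" `h^e` of `h : [q,1) → ℂ` to `ℝ₊`, defined by
`h^e(q^{2n}t) = h(t)` for `n ∈ ℕ₀`, `t ∈ [q,1)`, and `h^e = 0` otherwise. -/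
def IsEvenExt (q : ℝ) (h he : ℝ → ℂ) : Prop :=
  (∀ n : ℕ, ∀ t ∈ Set.Ico q 1, he (q ^ (2 * n) * t) = h t) ∧
  (∀ t : ℝ, (¬ ∃ n : ℕ, ∃ s ∈ Set.Ico q 1, t = q ^ (2 * n) * s) → he t = 0)

/-- `ho` is the "odd extension" `h^o` of `h : [q,1) → ℂ` to `ℝ₊`, defined by
`h^o(q^{2n+1}t) = h(t)` for `n ∈ ℕ₀`, `t ∈ [q,1)`, and `h^o = 0` otherwise. -/
def IsOddExt (q : ℝ) (h ho : ℝ → ℂ) : Prop :=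
  (∀ n : ℕ, ∀ t ∈ Set.Ico q 1, ho (q ^ (2 * n + 1) * t) = h t) ∧
  (∀ t : ℝ, (¬ ∃ n : ℕ, ∃ s ∈ Set.Ico q 1, t = q ^ (2 * n + 1) * s) → ho t = 0)

/-- For every `h ∈ 𝕳 = L²([q,1), μ₁)`, the functions `h^e` and `h^o`
belong to `D(X*)`, and `(X* h^e)(t) = −i t⁻¹ h(qt)` on `[1, q⁻¹)`, `= 0` elsewhere on `ℝ₊`,
while `(X* h^o)(t) = −i t⁻¹ h(t)` on `[q, 1)`, `= 0` elsewhere on `ℝ₊`. -/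
theorem stmt_5 (q : ℝ) (hq0 : 0 < q) (hq1 : q < 1)
    (μ₁ : Measure ℝ) [IsFiniteMeasure μ₁] (hμ₁supp : μ₁ (Set.Ico q 1)ᶜ = 0)
    (μ : Measure ℝ) (hμ0 : μ (Set.Ioi (0 : ℝ))ᶜ = 0)
    (hμ : ∀ M : Set ℝ, MeasurableSet M → M ⊆ Set.Ico q 1 → ∀ n : ℤ,
      μ ((fun t => q ^ n * t) '' M) = ENNReal.ofReal (q ^ n) * μ₁ M)
    (X : Lp ℂ 2 μ →ₗ.[ℂ] Lp ℂ 2 μ)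
    (hXdom : ∀ f : Lp ℂ 2 μ, f ∈ X.domain ↔ MemLp (fun t : ℝ => (t : ℂ)⁻¹ * f t) 2 μ)
    (hX : ∀ f : X.domain, ∀ᵐ t ∂μ,
      (X f) t = Complex.I * (t : ℂ)⁻¹ *
        ((f : Lp ℂ 2 μ) (q⁻¹ * t) - (f : Lp ℂ 2 μ) (q * t)))
    (h : ℝ → ℂ) (hh : MemLp h 2 μ₁)
    (he ho : ℝ → ℂ) (hhe : IsEvenExt q h he) (hho : IsOddExt q h ho) :
    (∃ ge : Lp ℂ 2 μ, (∀ᵐ t ∂μ, ge t = he t) ∧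
      ∃ hmem : ge ∈ X.adjoint.domain,
        ∀ᵐ t ∂μ, (X.adjoint ⟨ge, hmem⟩) t =
          if 1 ≤ t ∧ t < q⁻¹ then -Complex.I * (t : ℂ)⁻¹ * h (q * t) else 0) ∧
    (∃ go : Lp ℂ 2 μ, (∀ᵐ t ∂μ, go t = ho t) ∧
      ∃ hmem : go ∈ X.adjoint.domain,
        ∀ᵐ t ∂μ, (X.adjoint ⟨go, hmem⟩) t =
          if q ≤ t ∧ t < 1 then -Complex.I * (t : ℂ)⁻¹ * h t else 0) := by
  constructor
  · have hg1e : ∀ k : ℕ, ∀ s ∈ Set.Ico q 1, he (q ^ (2 * (k:ℤ) + 0) * s) = h s := by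
      intro k s hs
      have h1 := hhe.1 k s hs
      rwa [show q ^ (2*(k:ℤ)+0) = q ^ (2*k) from by
        rw [show (2*(k:ℤ)+0) = ((2*k:ℕ):ℤ) by push_cast; ring, zpow_natCast]]
    have hg2e : ∀ t : ℝ, (∀ k : ℕ, t ∉ S5.piece q (2*(k:ℤ)+0)) → he t = 0 := by
      intro t hnot
      refine hhe.2 t ?_
      rintro ⟨n, s, hs, rfl⟩
      refine hnot n ((S5.mem_piece_iff hq0).mpr ⟨s, hs, ?_⟩)
      rw [show (2*(n:ℤ)+0) = ((2*n:ℕ):ℤ) by push_cast; ring, zpow_natCast]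
    obtain ⟨gL, hgL, hmem, hval⟩ :=
      S5.core hq0 hq1 hμ₁supp hμ0 hμ X hXdom hX hh hg1e hg2e
    refine ⟨gL, hgL, hmem, ?_⟩
    refine hval.mono fun t ht => ?_
    rw [ht]
    have hiff : t ∈ S5.piece q ((0:ℤ)-1) ↔ (1 ≤ t ∧ t < q⁻¹) := by
      rw [S5.piece, show ((0:ℤ)-1+1) = 0 by ring, zpow_zero,
        show ((0:ℤ)-1) = -1 by ring, zpow_neg_one]
      exact Set.mem_Ico
    by_cases hc : 1 ≤ t ∧ t < q⁻¹
    · simp only [S5.Fcand]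
      rw [if_pos (hiff.mpr hc), if_pos hc, show (1-(0:ℤ)) = 1 by ring, zpow_one]
    · simp only [S5.Fcand]
      rw [if_neg (fun hmemt => hc (hiff.mp hmemt)), if_neg hc]
  · have hg1o : ∀ k : ℕ, ∀ s ∈ Set.Ico q 1, ho (q ^ (2 * (k:ℤ) + 1) * s) = h s := by
      intro k s hs
      have h1 := hho.1 k s hs
      rwa [show q ^ (2*(k:ℤ)+1) = q ^ (2*k+1) from by
        rw [show (2*(k:ℤ)+1) = ((2*k+1:ℕ):ℤ) by push_cast; ring, zpow_natCast]]
    have hg2o : ∀ t : ℝ, (∀ k : ℕ, t ∉ S5.piece q (2*(k:ℤ)+1)) → ho t = 0 := by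
      intro t hnot
      refine hho.2 t ?_
      rintro ⟨n, s, hs, rfl⟩
      refine hnot n ((S5.mem_piece_iff hq0).mpr ⟨s, hs, ?_⟩)
      rw [show (2*(n:ℤ)+1) = ((2*n+1:ℕ):ℤ) by push_cast; ring, zpow_natCast]
    obtain ⟨gL, hgL, hmem, hval⟩ :=
      S5.core hq0 hq1 hμ₁supp hμ0 hμ X hXdom hX hh hg1o hg2o
    refine ⟨gL, hgL, hmem, ?_⟩
    refine hval.mono fun t ht => ?_
    rw [ht]
    have hiff : t ∈ S5.piece q ((1:ℤ)-1) ↔ (q ≤ t ∧ t < 1) := by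
      rw [S5.piece, show ((1:ℤ)-1+1) = 1 by ring, zpow_one,
        show ((1:ℤ)-1) = 0 by ring, zpow_zero]
      exact Set.mem_Ico
    by_cases hc : q ≤ t ∧ t < 1
    · simp only [S5.Fcand]
      rw [if_pos (hiff.mpr hc), if_pos hc, show (1-(1:ℤ)) = 0 by ring, zpow_zero, one_mul]
    · simp only [S5.Fcand]
      rw [if_neg (fun hmemt => hc (hiff.mp hmemt)), if_neg hc]
end

section
/- (Example 5 irreducibility computation) Let K be a complex Hilbert space and T a bounded operator on K such that (1/3)·I ≤ T*T ≤ (2/3)·I and the only bounded operators commuting with both T and T* are the scalar multiples of the identity. Let Z be the unitary operator on K ⊕ K given by the operator matrix Z = [[T, √(I − TT*)], [−√(I − T*T), T*]]. If B and C are bounded self-adjoint operators on K such that the diagonal operator A = B ⊕ C on K ⊕ K commutes with Z, then B = C = λ·I for some λ ∈ ℂ. -/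
open ContinuousLinearMap

local notation "⟪" x ", " y "⟫" => @inner ℂ _ _ x y

/-- **Example 5.** Let `T` be a bounded operator on a complex Hilbert
space `K` with `(1/3)·I ≤ T*T ≤ (2/3)·I` whose joint commutant with `T*` is trivial,
and let `Z` be the unitary on `K ⊕ K` given by the operator matrix
`[[T, √(I − TT*)], [−√(I − T*T), T*]]`.  If `B, C` are bounded self-adjoint operators
on `K` such that `A = B ⊕ C` commutes with `Z`, then `B = C = λ·I` for some `λ ∈ ℂ`. -/
theorem stmt_18 {K : Type*} [NormedAddCommGroup K] [InnerProductSpace ℂ K] [CompleteSpace K]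
    (T : K →L[ℂ] K)
    (hlow : (adjoint T ∘L T - (1/3 : ℂ) • (1 : K →L[ℂ] K)).IsPositive)
    (hup : ((2/3 : ℂ) • (1 : K →L[ℂ] K) - adjoint T ∘L T).IsPositive)
    (hcomm : ∀ B : K →L[ℂ] K, B ∘L T = T ∘L B → B ∘L adjoint T = adjoint T ∘L B →
      ∃ c : ℂ, B = c • (1 : K →L[ℂ] K))
    (R₁ R₂ : K →L[ℂ] K)
    (hR₁pos : R₁.IsPositive) (hR₂pos : R₂.IsPositive)
    (hR₁sq : R₁ ∘L R₁ = 1 - adjoint T ∘L T)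
    (hR₂sq : R₂ ∘L R₂ = 1 - T ∘L adjoint T)
    (Z : WithLp 2 (K × K) ≃ₗᵢ[ℂ] WithLp 2 (K × K))
    (hZ : ∀ x y : K, Z ((WithLp.equiv 2 (K × K)).symm (x, y)) =
      (WithLp.equiv 2 (K × K)).symm (T x + R₂ y, -(R₁ x) + adjoint T y))
    (B C : K →L[ℂ] K) (hB : IsSelfAdjoint B) (hC : IsSelfAdjoint C)
    (hBCZ : ∀ x y : K,
      Z ((WithLp.equiv 2 (K × K)).symm (B x, C y)) =
        (WithLp.equiv 2 (K × K)).symm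
          (B ((WithLp.equiv 2 (K × K)) (Z ((WithLp.equiv 2 (K × K)).symm (x, y)))).1,
           C ((WithLp.equiv 2 (K × K)) (Z ((WithLp.equiv 2 (K × K)).symm (x, y)))).2)) :
    ∃ c : ℂ, B = c • (1 : K →L[ℂ] K) ∧ C = c • (1 : K →L[ℂ] K) := by
  -- trivial case
  rcases subsingleton_or_nontrivial K with hK | hK
  · exact ⟨0, Subsingleton.elim _ _, Subsingleton.elim _ _⟩
  -- extract componentwise relations
  have key : ∀ x y : K, T (B x) + R₂ (C y) = B (T x + R₂ y) ∧
      -(R₁ (B x)) + adjoint T (C y) = C (-(R₁ x) + adjoint T y) := by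
    intro x y
    have h := hBCZ x y
    rw [hZ (B x) (C y), hZ x y] at h
    simp only [Equiv.apply_symm_apply] at h
    have h' := (WithLp.equiv 2 (K × K)).symm.injective h
    exact ⟨congrArg Prod.fst h', congrArg Prod.snd h'⟩
  have hTB : ∀ x, T (B x) = B (T x) := by
    intro x
    have := (key x 0).1
    simpa using this
  have hR1B : ∀ x, R₁ (B x) = C (R₁ x) := by
    intro x
    have := (key x 0).2
    simpa using this
  have hR2C : ∀ y, R₂ (C y) = B (R₂ y) := by
    intro y
    have := (key 0 y).1
    simpa using this
  have hTC : ∀ y, adjoint T (C y) = C (adjoint T y) := by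
    intro y
    have := (key 0 y).2
    simpa using this
  -- operator forms
  have hBT : B ∘L T = T ∘L B := by ext x; exact (hTB x).symm
  have hCR₁ : C ∘L R₁ = R₁ ∘L B := by ext x; exact (hR1B x).symm
  have hBR₂ : B ∘L R₂ = R₂ ∘L C := by ext y; exact (hR2C y).symm
  have hCTs : C ∘L adjoint T = adjoint T ∘L C := by ext y; exact (hTC y).symm
  -- adjoints
  have hCR₂ : C ∘L R₂ = R₂ ∘L B := by
    have := congrArg adjoint hBR₂
    rw [adjoint_comp, adjoint_comp, hB.adjoint_eq, hC.adjoint_eq,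
      hR₂pos.isSelfAdjoint.adjoint_eq] at this
    exact this.symm
  have hCT : C ∘L T = T ∘L C := by
    have := congrArg adjoint hCTs
    rw [adjoint_comp, adjoint_comp, hC.adjoint_eq, adjoint_adjoint] at this
    exact this.symm
  -- B commutes with R₂² hence with T T*
  have hBR₂sq : B ∘L (R₂ ∘L R₂) = (R₂ ∘L R₂) ∘L B := by
    rw [← comp_assoc, hBR₂, comp_assoc, hCR₂, comp_assoc]
  have hBTTs : B ∘L (T ∘L adjoint T) = (T ∘L adjoint T) ∘L B := by
    rw [hR₂sq] at hBR₂sq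
    simp only [comp_sub, sub_comp, one_def, comp_id, id_comp] at hBR₂sq
    have := hBR₂sq
    -- B - B∘(T∘T*) = B - (T∘T*)∘B
    rw [sub_right_inj] at this
    exact this
  -- quantitative bounds
  have hlow' : ∀ x : K, (0:ℝ) ≤ ‖T x‖^2 - 1/3 * ‖x‖^2 := by
    intro x
    have h := hlow.2 x
    rw [ContinuousLinearMap.reApplyInnerSelf_apply] at h
    simp only [sub_apply, smul_apply, one_apply, comp_apply, inner_sub_left, inner_smul_left,
      ContinuousLinearMap.adjoint_inner_left, inner_self_eq_norm_sq_to_K] at h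
    rw [show (starRingEnd ℂ) ((1:ℂ)/3) = ((1/3 : ℝ) : ℂ) from by
      rw [map_div₀, map_one, map_ofNat]; push_cast; ring] at h
    simpa [Complex.coe_algebraMap, ← Complex.ofReal_mul, ← Complex.ofReal_sub,
      ← Complex.ofReal_pow, Complex.ofReal_re, RCLike.re_to_complex] using h
  have hup' : ∀ x : K, (0:ℝ) ≤ 2/3 * ‖x‖^2 - ‖T x‖^2 := by
    intro x
    have h := hup.2 x
    rw [ContinuousLinearMap.reApplyInnerSelf_apply] at h
    simp only [sub_apply, smul_apply, one_apply, comp_apply, inner_sub_left, inner_smul_left,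
      ContinuousLinearMap.adjoint_inner_left, inner_self_eq_norm_sq_to_K] at h
    rw [show (starRingEnd ℂ) ((2:ℂ)/3) = ((2/3 : ℝ) : ℂ) from by
      rw [map_div₀, map_ofNat, map_ofNat]; push_cast; ring] at h
    simpa [Complex.coe_algebraMap, ← Complex.ofReal_mul, ← Complex.ofReal_sub,
      ← Complex.ofReal_pow, Complex.ofReal_re, RCLike.re_to_complex] using h
  -- T is injective
  have hTinj : ∀ x : K, T x = 0 → x = 0 := by
    intro x hx
    have h := hlow' x
    rw [hx] at h
    simp only [norm_zero] at h
    have : ‖x‖ = 0 := by nlinarith [norm_nonneg x, sq_nonneg ‖x‖]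
    exact norm_eq_zero.mp this
  -- B commutes with T*
  have hBTs : B ∘L adjoint T = adjoint T ∘L B := by
    ext x
    simp only [comp_apply]
    rw [← sub_eq_zero]
    apply hTinj
    have h1 := hTB (adjoint T x)
    have h2 := congrArg (fun f => f x) hBTTs
    simp only [comp_apply] at h2
    rw [map_sub, h1, h2, sub_self]
  obtain ⟨c, hc⟩ := hcomm B hBT hBTs
  obtain ⟨d, hd⟩ := hcomm C hCT hCTs
  -- R₁ is injective
  have hR₁inj : ∀ x : K, R₁ x = 0 → x = 0 := by
    intro x hx
    have h2 : ⟪(R₁ ∘L R₁) x, x⟫ = ⟪x, x⟫ - ⟪T x, T x⟫ := by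
      rw [hR₁sq]
      simp only [sub_apply, ContinuousLinearMap.one_apply, comp_apply, inner_sub_left,
        ContinuousLinearMap.adjoint_inner_left]
    have h1 : ⟪(R₁ ∘L R₁) x, x⟫ = 0 := by
      have : ⟪R₁ (R₁ x), x⟫ = ⟪R₁ x, R₁ x⟫ := by
        rw [← ContinuousLinearMap.adjoint_inner_left, hR₁pos.isSelfAdjoint.adjoint_eq]
      rw [comp_apply, this, hx, inner_zero_left]
    rw [h1, inner_self_eq_norm_sq_to_K, inner_self_eq_norm_sq_to_K] at h2
    have h3 : (0:ℂ) = (((‖x‖^2 - ‖T x‖^2 : ℝ)) : ℂ) := by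
      rw [h2]
      simp only [Complex.coe_algebraMap, RCLike.ofReal_alg, Complex.real_smul]
      push_cast
      ring
    have h4 : (0:ℝ) = ‖x‖^2 - ‖T x‖^2 := by
      have := congrArg Complex.re h3
      simpa [← Complex.ofReal_pow, Complex.ofReal_re] using this
    have h := hup' x
    have : ‖x‖ = 0 := by nlinarith [norm_nonneg x, sq_nonneg ‖x‖]
    exact norm_eq_zero.mp this
  -- match scalars: c = d using C ∘ R₁ = R₁ ∘ B
  have hcd : c = d := by
    obtain ⟨x, hx⟩ := exists_ne (0 : K)
    have hRx : R₁ x ≠ 0 := fun h => hx (hR₁inj x h)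
    have : C (R₁ x) = R₁ (B x) := (hR1B x).symm
    rw [hc, hd] at this
    simp only [smul_apply, ContinuousLinearMap.one_apply, map_smul] at this
    have := sub_eq_zero.mpr this.symm
    rw [← sub_smul] at this
    by_contra hne
    have h5 : (c - d) ≠ 0 := sub_ne_zero.mpr hne
    have h6 := congrArg (fun v => (c - d)⁻¹ • v) this
    simp only [smul_smul, inv_mul_cancel₀ h5, one_smul, smul_zero] at h6
    exact hRx h6
  exact ⟨c, hc, hcd ▸ hd⟩
end

section
/- For 0 < q ≠ 1, there exist *-algebra isomorphisms ρ₁ and ρ₂ from A(q) onto A(q⁻¹) determined on the generators by ρ₁(x) = p, ρ₁(p) = x, ρ₁(u) = u, and ρ₂(x) = x, ρ₂(p) = p, ρ₂(u) = −u*. In particular, the *-algebras A(q) and A(q⁻¹) are isomorphic. -/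
noncomputable section

/-- The generator `p` of the `q`-deformed Heisenberg algebra (inside the free algebra). -/
def pGen : FreeAlgebra ℂ (Fin 4) := FreeAlgebra.ι ℂ 0
/-- The generator `x`. -/
def xGen : FreeAlgebra ℂ (Fin 4) := FreeAlgebra.ι ℂ 1
/-- The generator `u`. -/
def uGen : FreeAlgebra ℂ (Fin 4) := FreeAlgebra.ι ℂ 2
/-- The generator `u⁻¹`. -/
def vGen : FreeAlgebra ℂ (Fin 4) := FreeAlgebra.ι ℂ 3

/-- The defining relations of the `q`-deformed Heisenberg algebra `A(q)`:
`up = q pu`, `ux = q⁻¹ xu`, `uu⁻¹ = u⁻¹u = 1`,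
`px − q xp = i(q^{3/2} − q^{−1/2})u`, `xp − q px = −i(q^{3/2} − q^{−1/2})u⁻¹`. -/
inductive HeisRel (q : ℝ) : FreeAlgebra ℂ (Fin 4) → FreeAlgebra ℂ (Fin 4) → Prop
  | up : HeisRel q (uGen * pGen) ((q : ℂ) • (pGen * uGen))
  | ux : HeisRel q (uGen * xGen) ((q : ℂ)⁻¹ • (xGen * uGen))
  | uv : HeisRel q (uGen * vGen) 1
  | vu : HeisRel q (vGen * uGen) 1
  | px : HeisRel q (pGen * xGen - (q : ℂ) • (xGen * pGen))
      ((Complex.I * ((q ^ ((3 : ℝ)/2) - q ^ (-(1 : ℝ)/2) : ℝ) : ℂ)) • uGen)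
  | xp : HeisRel q (xGen * pGen - (q : ℂ) • (pGen * xGen))
      ((-(Complex.I * ((q ^ ((3 : ℝ)/2) - q ^ (-(1 : ℝ)/2) : ℝ) : ℂ))) • vGen)

/-- The `q`-deformed Heisenberg algebra `A(q)`. -/
abbrev HeisAlg (q : ℝ) : Type := RingQuot (HeisRel q)

/-- The canonical quotient map onto `A(q)`. -/
def heisMk (q : ℝ) : FreeAlgebra ℂ (Fin 4) →ₐ[ℂ] HeisAlg q :=
  RingQuot.mkAlgHom ℂ (HeisRel q)

/-- `s` is the involution of `A(q)`: antilinear, antimultiplicative, involutive, and on the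
generators `p* = p`, `x* = x`, `u* = u⁻¹`, `(u⁻¹)* = u`. -/
def IsInvolution (q : ℝ) (s : HeisAlg q → HeisAlg q) : Prop :=
  (∀ a b, s (a + b) = s a + s b) ∧
  (∀ (c : ℂ) (a), s (c • a) = (starRingEnd ℂ) c • s a) ∧
  (∀ a b, s (a * b) = s b * s a) ∧
  (∀ a, s (s a) = a) ∧
  s (heisMk q pGen) = heisMk q pGen ∧
  s (heisMk q xGen) = heisMk q xGen ∧
  s (heisMk q uGen) = heisMk q vGen ∧
  s (heisMk q vGen) = heisMk q uGen

/-! ### Auxiliary material -/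

/-- The structure constant `c(q) = i(q^{3/2} - q^{-1/2})`. -/
def cC (q : ℝ) : ℂ := Complex.I * ((q ^ ((3 : ℝ)/2) - q ^ (-(1 : ℝ)/2) : ℝ) : ℂ)

lemma rel_up (q : ℝ) : heisMk q uGen * heisMk q pGen = (q : ℂ) • (heisMk q pGen * heisMk q uGen) := by
  have h := RingQuot.mkAlgHom_rel ℂ (HeisRel.up (q := q))
  rw [map_mul, map_smul, map_mul] at h
  exact h

lemma rel_ux (q : ℝ) : heisMk q uGen * heisMk q xGen = (q : ℂ)⁻¹ • (heisMk q xGen * heisMk q uGen) := by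
  have h := RingQuot.mkAlgHom_rel ℂ (HeisRel.ux (q := q))
  rw [map_mul, map_smul, map_mul] at h
  exact h

lemma rel_uv (q : ℝ) : heisMk q uGen * heisMk q vGen = 1 := by
  simpa [heisMk, map_smul] using RingQuot.mkAlgHom_rel ℂ (HeisRel.uv (q := q))

lemma rel_vu (q : ℝ) : heisMk q vGen * heisMk q uGen = 1 := by
  simpa [heisMk, map_smul] using RingQuot.mkAlgHom_rel ℂ (HeisRel.vu (q := q))

lemma rel_px (q : ℝ) :
    heisMk q pGen * heisMk q xGen - (q : ℂ) • (heisMk q xGen * heisMk q pGen)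
      = cC q • heisMk q uGen := by
  have h := RingQuot.mkAlgHom_rel ℂ (HeisRel.px (q := q))
  rw [map_sub, map_mul, map_smul, map_mul, map_smul] at h
  exact h

lemma rel_xp (q : ℝ) :
    heisMk q xGen * heisMk q pGen - (q : ℂ) • (heisMk q pGen * heisMk q xGen)
      = (-(cC q)) • heisMk q vGen := by
  have h := RingQuot.mkAlgHom_rel ℂ (HeisRel.xp (q := q))
  rw [map_sub, map_mul, map_smul, map_mul, map_smul] at h
  exact h

lemma key_real (q : ℝ) (hq : 0 < q) :
    q * ((q⁻¹) ^ ((3:ℝ)/2) - (q⁻¹) ^ (-(1:ℝ)/2)) = -(q ^ ((3:ℝ)/2) - q ^ (-(1:ℝ)/2)) := by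
  rw [Real.inv_rpow hq.le, Real.inv_rpow hq.le, ← Real.rpow_neg hq.le, ← Real.rpow_neg hq.le]
  have h1 : q ^ (-((3:ℝ)/2)) * q = q ^ (-(1:ℝ)/2) := by
    rw [← Real.rpow_add_one hq.ne']; norm_num
  have h2 : q ^ (-(-(1:ℝ)/2)) * q = q ^ ((3:ℝ)/2) := by
    rw [← Real.rpow_add_one hq.ne']; norm_num
  rw [mul_sub, mul_comm q, mul_comm q, h1, h2]; ring

lemma key_c {q q' : ℝ} (hq0 : 0 < q) (hq' : q' = q⁻¹) : (q : ℂ) * cC q' = -(cC q) := by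
  subst hq'
  have h := key_real q hq0
  unfold cC
  calc (q:ℂ) * (Complex.I * ((q⁻¹ ^ ((3:ℝ)/2) - q⁻¹ ^ (-(1:ℝ)/2) : ℝ) : ℂ))
      = Complex.I * ((q * (q⁻¹ ^ ((3:ℝ)/2) - q⁻¹ ^ (-(1:ℝ)/2)) : ℝ) : ℂ) := by push_cast; ring
    _ = Complex.I * ((-(q ^ ((3:ℝ)/2) - q ^ (-(1:ℝ)/2)) : ℝ) : ℂ) := by rw [h]
    _ = -(Complex.I * ((q ^ ((3:ℝ)/2) - q ^ (-(1:ℝ)/2) : ℝ) : ℂ)) := by push_cast; ring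

lemma key_qq' {q q' : ℝ} (hq0 : 0 < q) (hq' : q' = q⁻¹) : (q : ℂ) * (q' : ℂ) = 1 := by
  subst hq'
  rw [← Complex.ofReal_mul, mul_inv_cancel₀ hq0.ne', Complex.ofReal_one]

section Derived

variable {q q' : ℝ}

lemma coe_q' (hq' : q' = q⁻¹) : ((q' : ℝ) : ℂ) = (q : ℂ)⁻¹ := by
  subst hq'; exact Complex.ofReal_inv q

lemma coe_q'_inv (hq0 : 0 < q) (hq' : q' = q⁻¹) : ((q' : ℝ) : ℂ)⁻¹ = (q : ℂ) := by
  rw [coe_q' hq', inv_inv]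

lemma t_ux (hq0 : 0 < q) (hq' : q' = q⁻¹) :
    heisMk q' uGen * heisMk q' xGen = (q : ℂ) • (heisMk q' xGen * heisMk q' uGen) := by
  rw [rel_ux q', coe_q'_inv hq0 hq']

lemma t_up (hq0 : 0 < q) (hq' : q' = q⁻¹) :
    heisMk q' uGen * heisMk q' pGen = (q : ℂ)⁻¹ • (heisMk q' pGen * heisMk q' uGen) := by
  rw [rel_up q', coe_q' hq']

lemma t_xp (hq0 : 0 < q) (hq' : q' = q⁻¹) :
    heisMk q' xGen * heisMk q' pGen - (q : ℂ) • (heisMk q' pGen * heisMk q' xGen)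
      = cC q • heisMk q' uGen := by
  have h := rel_px q'
  have hq : (q : ℂ) * (q' : ℂ) = 1 := key_qq' hq0 hq'
  have hc := key_c hq0 hq'
  rw [sub_eq_iff_eq_add] at h
  rw [h, smul_add, smul_smul, smul_smul, hq, hc, one_smul]
  module

lemma t_px (hq0 : 0 < q) (hq' : q' = q⁻¹) :
    heisMk q' pGen * heisMk q' xGen - (q : ℂ) • (heisMk q' xGen * heisMk q' pGen)
      = (-(cC q)) • heisMk q' vGen := by
  have h := rel_xp q'
  have hq : (q : ℂ) * (q' : ℂ) = 1 := key_qq' hq0 hq'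
  have hc : (q : ℂ) * (-(cC q')) = cC q := by rw [mul_neg, key_c hq0 hq', neg_neg]
  rw [sub_eq_iff_eq_add] at h
  rw [h, smul_add, smul_smul, smul_smul, hq, hc, one_smul]
  module

lemma t_vp (hq0 : 0 < q) (hq' : q' = q⁻¹) :
    heisMk q' vGen * heisMk q' pGen = (q : ℂ) • (heisMk q' pGen * heisMk q' vGen) := by
  have hq : (q : ℂ) * (q' : ℂ) = 1 := key_qq' hq0 hq'
  have h1 : heisMk q' pGen * heisMk q' vGen = (q' : ℂ) • (heisMk q' vGen * heisMk q' pGen) := by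
    calc heisMk q' pGen * heisMk q' vGen
        = (heisMk q' vGen * heisMk q' uGen) * (heisMk q' pGen * heisMk q' vGen) := by
          rw [rel_vu, one_mul]
      _ = heisMk q' vGen * ((heisMk q' uGen * heisMk q' pGen) * heisMk q' vGen) := by
          simp only [mul_assoc]
      _ = heisMk q' vGen * (((q' : ℂ) • (heisMk q' pGen * heisMk q' uGen)) * heisMk q' vGen) := by
          rw [rel_up]
      _ = (q' : ℂ) • (heisMk q' vGen * (heisMk q' pGen * (heisMk q' uGen * heisMk q' vGen))) := by
          simp only [mul_smul_comm, smul_mul_assoc, mul_assoc]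
      _ = (q' : ℂ) • (heisMk q' vGen * heisMk q' pGen) := by rw [rel_uv, mul_one]
  rw [h1, smul_smul, hq, one_smul]

lemma t_vx (hq0 : 0 < q) (hq' : q' = q⁻¹) :
    heisMk q' vGen * heisMk q' xGen = (q : ℂ)⁻¹ • (heisMk q' xGen * heisMk q' vGen) := by
  have hq : (q : ℂ) ≠ 0 := by exact_mod_cast hq0.ne'
  have h1 : heisMk q' xGen * heisMk q' vGen = (q : ℂ) • (heisMk q' vGen * heisMk q' xGen) := by
    calc heisMk q' xGen * heisMk q' vGen
        = (heisMk q' vGen * heisMk q' uGen) * (heisMk q' xGen * heisMk q' vGen) := by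
          rw [rel_vu, one_mul]
      _ = heisMk q' vGen * ((heisMk q' uGen * heisMk q' xGen) * heisMk q' vGen) := by
          simp only [mul_assoc]
      _ = heisMk q' vGen * (((q : ℂ) • (heisMk q' xGen * heisMk q' uGen)) * heisMk q' vGen) := by
          rw [t_ux hq0 hq']
      _ = (q : ℂ) • (heisMk q' vGen * (heisMk q' xGen * (heisMk q' uGen * heisMk q' vGen))) := by
          simp only [mul_smul_comm, smul_mul_assoc, mul_assoc]
      _ = (q : ℂ) • (heisMk q' vGen * heisMk q' xGen) := by rw [rel_uv, mul_one]
  rw [h1, smul_smul, inv_mul_cancel₀ hq, one_smul]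

end Derived

section Homs

lemma exists_rho1 (q q' : ℝ) (hq0 : 0 < q) (hq' : q' = q⁻¹) :
    ∃ ρ : HeisAlg q →ₐ[ℂ] HeisAlg q',
      ρ (heisMk q pGen) = heisMk q' xGen ∧ ρ (heisMk q xGen) = heisMk q' pGen ∧
      ρ (heisMk q uGen) = heisMk q' uGen ∧ ρ (heisMk q vGen) = heisMk q' vGen := by
  let g : Fin 4 → HeisAlg q' := fun i =>
    match i with
    | 0 => heisMk q' xGen
    | 1 => heisMk q' pGen
    | 2 => heisMk q' uGen
    | 3 => heisMk q' vGen
  let f : FreeAlgebra ℂ (Fin 4) →ₐ[ℂ] HeisAlg q' := FreeAlgebra.lift ℂ g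
  have hfp : f pGen = heisMk q' xGen := by simp [f, g, pGen, FreeAlgebra.lift_ι_apply]
  have hfx : f xGen = heisMk q' pGen := by simp [f, g, xGen, FreeAlgebra.lift_ι_apply]
  have hfu : f uGen = heisMk q' uGen := by simp [f, g, uGen, FreeAlgebra.lift_ι_apply]
  have hfv : f vGen = heisMk q' vGen := by simp [f, g, vGen, FreeAlgebra.lift_ι_apply]
  have hrel : ∀ ⦃a b⦄, HeisRel q a b → f a = f b := by
    intro a b r
    cases r with
    | up =>
        rw [map_mul, map_smul, map_mul, hfp, hfu]
        exact t_ux hq0 hq'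
    | ux =>
        rw [map_mul, map_smul, map_mul, hfx, hfu]
        exact t_up hq0 hq'
    | uv =>
        rw [map_mul, map_one, hfu, hfv]
        exact rel_uv q'
    | vu =>
        rw [map_mul, map_one, hfu, hfv]
        exact rel_vu q'
    | px =>
        rw [map_sub, map_mul, map_smul, map_mul, map_smul, hfp, hfx, hfu]
        exact t_xp hq0 hq'
    | xp =>
        rw [map_sub, map_mul, map_smul, map_mul, map_smul, hfp, hfx, hfv]
        exact t_px hq0 hq'
  refine ⟨RingQuot.liftAlgHom ℂ ⟨f, hrel⟩, ?_, ?_, ?_, ?_⟩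
  · exact (RingQuot.liftAlgHom_mkAlgHom_apply ℂ f hrel pGen).trans hfp
  · exact (RingQuot.liftAlgHom_mkAlgHom_apply ℂ f hrel xGen).trans hfx
  · exact (RingQuot.liftAlgHom_mkAlgHom_apply ℂ f hrel uGen).trans hfu
  · exact (RingQuot.liftAlgHom_mkAlgHom_apply ℂ f hrel vGen).trans hfv

lemma exists_rho2 (q q' : ℝ) (hq0 : 0 < q) (hq' : q' = q⁻¹) :
    ∃ ρ : HeisAlg q →ₐ[ℂ] HeisAlg q',
      ρ (heisMk q pGen) = heisMk q' pGen ∧ ρ (heisMk q xGen) = heisMk q' xGen ∧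
      ρ (heisMk q uGen) = -(heisMk q' vGen) ∧ ρ (heisMk q vGen) = -(heisMk q' uGen) := by
  let g : Fin 4 → HeisAlg q' := fun i =>
    match i with
    | 0 => heisMk q' pGen
    | 1 => heisMk q' xGen
    | 2 => (-1 : ℂ) • heisMk q' vGen
    | 3 => (-1 : ℂ) • heisMk q' uGen
  let f : FreeAlgebra ℂ (Fin 4) →ₐ[ℂ] HeisAlg q' := FreeAlgebra.lift ℂ g
  have hfp : f pGen = heisMk q' pGen := by simp only [f, g, pGen, FreeAlgebra.lift_ι_apply]
  have hfx : f xGen = heisMk q' xGen := by simp only [f, g, xGen, FreeAlgebra.lift_ι_apply]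
  have hfu : f uGen = (-1 : ℂ) • heisMk q' vGen := by
    simp only [f, g, uGen, FreeAlgebra.lift_ι_apply]
  have hfv : f vGen = (-1 : ℂ) • heisMk q' uGen := by
    simp only [f, g, vGen, FreeAlgebra.lift_ι_apply]
  have hrel : ∀ ⦃a b⦄, HeisRel q a b → f a = f b := by
    intro a b r
    cases r with
    | up =>
        rw [map_mul, map_smul, map_mul, hfp, hfu]
        rw [smul_mul_assoc, mul_smul_comm, t_vp hq0 hq', smul_smul, smul_smul,
          mul_comm ((-1 : ℂ))]
    | ux =>
        rw [map_mul, map_smul, map_mul, hfx, hfu]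
        rw [smul_mul_assoc, mul_smul_comm, t_vx hq0 hq', smul_smul, smul_smul,
          mul_comm ((-1 : ℂ))]
    | uv =>
        rw [map_mul, map_one, hfu, hfv]
        rw [smul_mul_assoc, mul_smul_comm, smul_smul,
          show ((-1 : ℂ) * (-1 : ℂ)) = 1 by norm_num, one_smul]
        exact rel_vu q'
    | vu =>
        rw [map_mul, map_one, hfu, hfv]
        rw [smul_mul_assoc, mul_smul_comm, smul_smul,
          show ((-1 : ℂ) * (-1 : ℂ)) = 1 by norm_num, one_smul]
        exact rel_uv q'
    | px =>
        rw [map_sub, map_mul, map_smul, map_mul, map_smul, hfp, hfx, hfu]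
        rw [smul_smul, t_px hq0 hq',
          show (Complex.I * ((q ^ ((3 : ℝ)/2) - q ^ (-(1 : ℝ)/2) : ℝ) : ℂ)) * (-1 : ℂ)
            = -(cC q) by rw [cC]; ring]
    | xp =>
        rw [map_sub, map_mul, map_smul, map_mul, map_smul, hfp, hfx, hfv]
        rw [smul_smul, t_xp hq0 hq',
          show (-(Complex.I * ((q ^ ((3 : ℝ)/2) - q ^ (-(1 : ℝ)/2) : ℝ) : ℂ))) * (-1 : ℂ)
            = cC q by rw [cC]; ring]
  have hneg : ∀ a : HeisAlg q', (-1 : ℂ) • a = -a := fun a => by module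
  refine ⟨RingQuot.liftAlgHom ℂ ⟨f, hrel⟩, ?_, ?_, ?_, ?_⟩
  · exact (RingQuot.liftAlgHom_mkAlgHom_apply ℂ f hrel pGen).trans hfp
  · exact (RingQuot.liftAlgHom_mkAlgHom_apply ℂ f hrel xGen).trans hfx
  · exact (RingQuot.liftAlgHom_mkAlgHom_apply ℂ f hrel uGen).trans
      (hfu.trans (hneg _))
  · exact (RingQuot.liftAlgHom_mkAlgHom_apply ℂ f hrel vGen).trans
      (hfv.trans (hneg _))

lemma heis_hom_ext {q q' : ℝ} {f g : HeisAlg q →ₐ[ℂ] HeisAlg q'}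
    (h0 : f (heisMk q pGen) = g (heisMk q pGen))
    (h1 : f (heisMk q xGen) = g (heisMk q xGen))
    (h2 : f (heisMk q uGen) = g (heisMk q uGen))
    (h3 : f (heisMk q vGen) = g (heisMk q vGen)) : f = g := by
  apply RingQuot.ringQuot_ext'
  apply FreeAlgebra.hom_ext
  funext i
  fin_cases i
  · simpa [heisMk, pGen] using h0
  · simpa [heisMk, xGen] using h1
  · simpa [heisMk, uGen] using h2
  · simpa [heisMk, vGen] using h3

end Homs

lemma inv_one_eq {q : ℝ} {s : HeisAlg q → HeisAlg q} (hs : IsInvolution q s) : s 1 = 1 := by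
  obtain ⟨-, -, smul2, sinv, -⟩ := hs
  have h := smul2 (s 1) 1
  rw [mul_one, sinv, mul_one] at h
  exact h.symm

lemma inv_neg_eq {q : ℝ} {s : HeisAlg q → HeisAlg q} (hs : IsInvolution q s) (a : HeisAlg q) :
    s (-a) = -(s a) := by
  have hneg : ∀ b : HeisAlg q, (-1 : ℂ) • b = -b := fun b => by module
  calc s (-a) = s ((-1 : ℂ) • a) := by rw [hneg]
    _ = (starRingEnd ℂ) (-1) • s a := hs.2.1 _ _
    _ = (-1 : ℂ) • s a := by norm_num
    _ = -(s a) := hneg _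

lemma intertwine {q q' : ℝ} (ρ : HeisAlg q →ₐ[ℂ] HeisAlg q')
    (s : HeisAlg q → HeisAlg q) (s' : HeisAlg q' → HeisAlg q')
    (hs : IsInvolution q s) (hs' : IsInvolution q' s')
    (hp : ρ (s (heisMk q pGen)) = s' (ρ (heisMk q pGen)))
    (hx : ρ (s (heisMk q xGen)) = s' (ρ (heisMk q xGen)))
    (hu : ρ (s (heisMk q uGen)) = s' (ρ (heisMk q uGen)))
    (hv : ρ (s (heisMk q vGen)) = s' (ρ (heisMk q vGen))) :
    ∀ a, ρ (s a) = s' (ρ a) := by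
  have hs1 : s 1 = 1 := inv_one_eq hs
  have hs'1 : s' 1 = 1 := inv_one_eq hs'
  obtain ⟨sadd, ssmul, smul2, -, -⟩ := hs
  obtain ⟨s'add, s'smul, s'mul2, -, -⟩ := hs'
  intro a
  obtain ⟨b, rfl⟩ := RingQuot.mkAlgHom_surjective ℂ (HeisRel q) a
  show ρ (s (heisMk q b)) = s' (ρ (heisMk q b))
  refine FreeAlgebra.induction ℂ (Fin 4)
    (motive := fun b => ρ (s (heisMk q b)) = s' (ρ (heisMk q b))) ?_ ?_ ?_ ?_ b
  · intro c
    have h1 : heisMk q (algebraMap ℂ _ c) = c • (1 : HeisAlg q) := by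
      rw [AlgHom.commutes, Algebra.algebraMap_eq_smul_one]
    rw [h1]
    simp only [ssmul, hs1, map_smul, map_one, s'smul, hs'1]
  · intro i
    fin_cases i
    · exact hp
    · exact hx
    · exact hu
    · exact hv
  · intro a b ha hb
    rw [map_mul]
    calc ρ (s (heisMk q a * heisMk q b))
        = ρ (s (heisMk q b)) * ρ (s (heisMk q a)) := by rw [smul2, map_mul]
      _ = s' (ρ (heisMk q b)) * s' (ρ (heisMk q a)) := by rw [ha, hb]
      _ = s' (ρ (heisMk q a) * ρ (heisMk q b)) := (s'mul2 _ _).symm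
      _ = s' (ρ (heisMk q a * heisMk q b)) := by rw [map_mul]
  · intro a b ha hb
    rw [map_add]
    rw [sadd, map_add, map_add, ha, hb, s'add]

/-- For `0 < q ≠ 1` there are `*`-algebra isomorphisms
`ρ₁, ρ₂ : A(q) → A(q⁻¹)` with `ρ₁(x) = p`, `ρ₁(p) = x`, `ρ₁(u) = u` and `ρ₂(x) = x`,
`ρ₂(p) = p`, `ρ₂(u) = −u*`; in particular `A(q)` and `A(q⁻¹)` are isomorphic as
`*`-algebras (they intertwine the involutions). -/
theorem stmt_19 (q : ℝ) (hq0 : 0 < q) (hq1 : q ≠ 1) :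
    ∃ ρ₁ ρ₂ : HeisAlg q ≃ₐ[ℂ] HeisAlg q⁻¹,
      ρ₁ (heisMk q xGen) = heisMk q⁻¹ pGen ∧
      ρ₁ (heisMk q pGen) = heisMk q⁻¹ xGen ∧
      ρ₁ (heisMk q uGen) = heisMk q⁻¹ uGen ∧
      ρ₂ (heisMk q xGen) = heisMk q⁻¹ xGen ∧
      ρ₂ (heisMk q pGen) = heisMk q⁻¹ pGen ∧
      ρ₂ (heisMk q uGen) = -(heisMk q⁻¹ vGen) ∧
      (∀ (s : HeisAlg q → HeisAlg q) (s' : HeisAlg q⁻¹ → HeisAlg q⁻¹),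
        IsInvolution q s → IsInvolution q⁻¹ s' →
        (∀ a, ρ₁ (s a) = s' (ρ₁ a)) ∧ (∀ a, ρ₂ (s a) = s' (ρ₂ a))) := by
  have hq0' : 0 < q⁻¹ := inv_pos.mpr hq0
  obtain ⟨ρa, hap, hax, hau, hav⟩ := exists_rho1 q q⁻¹ hq0 rfl
  obtain ⟨ρb, hbp, hbx, hbu, hbv⟩ := exists_rho1 q⁻¹ q hq0' (inv_inv q).symm
  obtain ⟨σa, sap, sax, sau, sav⟩ := exists_rho2 q q⁻¹ hq0 rfl
  obtain ⟨σb, sbp, sbx, sbu, sbv⟩ := exists_rho2 q⁻¹ q hq0' (inv_inv q).symm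
  have hba : ρa.comp ρb = AlgHom.id ℂ (HeisAlg q⁻¹) := by
    refine heis_hom_ext ?_ ?_ ?_ ?_ <;>
      simp [AlgHom.coe_comp, Function.comp, hbp, hbx, hbu, hbv, hap, hax, hau, hav]
  have hab : ρb.comp ρa = AlgHom.id ℂ (HeisAlg q) := by
    refine heis_hom_ext ?_ ?_ ?_ ?_ <;>
      simp [AlgHom.coe_comp, Function.comp, hbp, hbx, hbu, hbv, hap, hax, hau, hav]
  have sba : σa.comp σb = AlgHom.id ℂ (HeisAlg q⁻¹) := by
    refine heis_hom_ext ?_ ?_ ?_ ?_ <;>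
      simp [AlgHom.coe_comp, Function.comp, sbp, sbx, sbu, sbv, sap, sax, sau, sav]
  have sab : σb.comp σa = AlgHom.id ℂ (HeisAlg q) := by
    refine heis_hom_ext ?_ ?_ ?_ ?_ <;>
      simp [AlgHom.coe_comp, Function.comp, sbp, sbx, sbu, sbv, sap, sax, sau, sav]
  refine ⟨AlgEquiv.ofAlgHom ρa ρb hba hab, AlgEquiv.ofAlgHom σa σb sba sab,
    hax, hap, hau, sax, sap, sau, ?_⟩
  intro s s' hs hs'
  have hsp := hs.2.2.2.2.1
  have hsx := hs.2.2.2.2.2.1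
  have hsu := hs.2.2.2.2.2.2.1
  have hsv := hs.2.2.2.2.2.2.2
  have hs'p := hs'.2.2.2.2.1
  have hs'x := hs'.2.2.2.2.2.1
  have hs'u := hs'.2.2.2.2.2.2.1
  have hs'v := hs'.2.2.2.2.2.2.2
  constructor
  · exact intertwine ρa s s' hs hs'
      (by rw [hsp, hap, hs'x]) (by rw [hsx, hax, hs'p])
      (by rw [hsu, hav, hau, hs'u]) (by rw [hsv, hau, hav, hs'v])
  · refine intertwine σa s s' hs hs'
      (by rw [hsp, sap, hs'p]) (by rw [hsx, sax, hs'x]) ?_ ?_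
    · rw [hsu, sav, sau, inv_neg_eq hs', hs'v]
    · rw [hsv, sau, sav, inv_neg_eq hs', hs'u]
end
end
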